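/- arXiv:2309.01746 — 5 statements merged into one kernel-verified Lean document; each statement's English description precedes it below -/
import Mathlib

section
/- Let K be a field equipped with a valuation v : K → ℝ≥0, and let R be a commutative K-algebra generated as a K-algebra by finitely many elements T₁, …, Tₙ. If the set { (w(T₁), …, w(Tₙ)) ∈ (ℝ≥0)ⁿ : w is a valuation on R (in the sense of Mathlib's Valuation R ℝ≥0) satisfying w(algebraMap K R c) = v(c) for all c ∈ K } is finite, then the set of K-algebra homomorphisms R → K is finite. -/
open scoped NNReal

open Polynomial

noncomputable section LafforgueAux

variable {K : Type*} [Field K] (v : Valuation K ℝ≥0) (r : ℝ≥0)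

/-- The Gauss "norm" of radius `r` on `K[X]`. -/
def gaussFun (p : K[X]) : ℝ≥0 := p.support.sup fun k => v (p.coeff k) * r ^ k

lemma gaussFun_coeff_le (p : K[X]) (k : ℕ) :
    v (p.coeff k) * r ^ k ≤ gaussFun v r p := by
  by_cases h : k ∈ p.support
  · exact Finset.le_sup (f := fun k => v (p.coeff k) * r ^ k) h
  · simp [Polynomial.notMem_support_iff.mp h, (zero_le : (0:ℝ≥0) ≤ _)]

lemma gaussFun_le {p : K[X]} {c : ℝ≥0} (h : ∀ k, v (p.coeff k) * r ^ k ≤ c) :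
    gaussFun v r p ≤ c := Finset.sup_le fun k _ => h k

lemma gaussFun_C (c : K) : gaussFun v r (C c) = v c := by
  by_cases hc : c = 0
  · simp [hc, gaussFun]
  · rw [gaussFun, Polynomial.support_C hc]
    simp

lemma gaussFun_X : gaussFun v (K := K) r X = r := by
  rw [gaussFun, Polynomial.support_X]
  simp

variable {r}

lemma gaussFun_ne_zero (hr : r ≠ 0) {p : K[X]} (hp : p ≠ 0) : gaussFun v r p ≠ 0 := by
  intro h0
  have hk := p.natDegree_mem_support_of_nonzero hp
  have := gaussFun_coeff_le v r p p.natDegree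
  rw [h0, le_zero_iff, mul_eq_zero] at this
  rcases this with h | h
  · exact (Polynomial.mem_support_iff.mp hk) ((Valuation.zero_iff v).mp h)
  · exact hr (pow_eq_zero_iff'.mp h).1

/-- The minimal index realizing the Gauss norm. -/
lemma gaussFun_exists_min (hr : r ≠ 0) {p : K[X]} (hp : p ≠ 0) :
    ∃ i₀ ∈ p.support, v (p.coeff i₀) * r ^ i₀ = gaussFun v r p ∧
      ∀ i < i₀, v (p.coeff i) * r ^ i < gaussFun v r p := by
  classical
  obtain ⟨j, hj, hjs⟩ := Finset.exists_mem_eq_sup p.support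
    (Polynomial.support_nonempty.mpr hp) (fun k => v (p.coeff k) * r ^ k)
  set I : Finset ℕ := p.support.filter (fun i => v (p.coeff i) * r ^ i = gaussFun v r p) with hI
  have hIne : I.Nonempty := ⟨j, Finset.mem_filter.mpr ⟨hj, hjs.symm⟩⟩
  refine ⟨I.min' hIne, (Finset.mem_filter.mp (I.min'_mem hIne)).1,
    (Finset.mem_filter.mp (I.min'_mem hIne)).2, fun i hi => ?_⟩
  rcases lt_or_eq_of_le (gaussFun_coeff_le v r p i) with h | h
  · exact h
  · exfalso
    have hiI : i ∈ I := by
      refine Finset.mem_filter.mpr ⟨Polynomial.mem_support_iff.mpr (fun hc => ?_), h⟩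
      · exact gaussFun_ne_zero v hr hp (by simpa [hc] using h.symm)
    exact absurd (I.min'_le i hiI) (not_le.mpr hi)

lemma gaussFun_mul (hr : r ≠ 0) (p q : K[X]) :
    gaussFun v r (p * q) = gaussFun v r p * gaussFun v r q := by
  classical
  by_cases hp : p = 0
  · simp [hp, gaussFun]
  by_cases hq : q = 0
  · simp [hq, gaussFun]
  set gp := gaussFun v r p
  set gq := gaussFun v r q
  have hgp : gp ≠ 0 := gaussFun_ne_zero v hr hp
  have hgq : gq ≠ 0 := gaussFun_ne_zero v hr hq
  -- upper bound for coefficients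
  have key_le : ∀ k, v ((p * q).coeff k) ≤ gp * gq / r ^ k := by
    intro k
    rw [Polynomial.coeff_mul]
    refine Valuation.map_sum_le v (fun x hx => ?_)
    have hxk : x.1 + x.2 = k := Finset.HasAntidiagonal.mem_antidiagonal.mp hx
    rw [Valuation.map_mul]
    have h1 : v (p.coeff x.1) * r ^ x.1 ≤ gp := gaussFun_coeff_le v r p x.1
    have h2 : v (q.coeff x.2) * r ^ x.2 ≤ gq := gaussFun_coeff_le v r q x.2
    rw [le_div_iff₀ (pos_iff_ne_zero.mpr (pow_ne_zero _ hr)), ← hxk, pow_add]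
    calc v (p.coeff x.1) * v (q.coeff x.2) * (r ^ x.1 * r ^ x.2)
        = (v (p.coeff x.1) * r ^ x.1) * (v (q.coeff x.2) * r ^ x.2) := by ring
      _ ≤ gp * gq := mul_le_mul' h1 h2
  refine le_antisymm (gaussFun_le v (r := r) (fun k => ?_)) ?_
  · rw [← le_div_iff₀ (pos_iff_ne_zero.mpr (pow_ne_zero _ hr))]
    exact key_le k
  -- lower bound via the minimal indices
  obtain ⟨i₀, hi₀s, hi₀, hi₀min⟩ := gaussFun_exists_min v hr hp
  obtain ⟨j₀, hj₀s, hj₀, hj₀min⟩ := gaussFun_exists_min v hr hq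
  set k₀ := i₀ + j₀
  have hmem : (i₀, j₀) ∈ Finset.HasAntidiagonal.antidiagonal k₀ := Finset.HasAntidiagonal.mem_antidiagonal.mpr rfl
  have hcoeff : (p * q).coeff k₀ =
      p.coeff i₀ * q.coeff j₀ +
        ∑ x ∈ (Finset.HasAntidiagonal.antidiagonal k₀).erase (i₀, j₀), p.coeff x.1 * q.coeff x.2 := by
    rw [Polynomial.coeff_mul, ← Finset.add_sum_erase _ (fun x => p.coeff x.1 * q.coeff x.2) hmem]
  have hrk : (r : ℝ≥0) ^ k₀ ≠ 0 := pow_ne_zero _ hr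
  have hmain : v (p.coeff i₀ * q.coeff j₀) = gp * gq / r ^ k₀ := by
    rw [Valuation.map_mul, eq_div_iff hrk, pow_add]
    calc v (p.coeff i₀) * v (q.coeff j₀) * (r ^ i₀ * r ^ j₀)
        = (v (p.coeff i₀) * r ^ i₀) * (v (q.coeff j₀) * r ^ j₀) := by ring
      _ = gp * gq := by rw [hi₀, hj₀]
  have hrest : v (∑ x ∈ (Finset.HasAntidiagonal.antidiagonal k₀).erase (i₀, j₀),
      p.coeff x.1 * q.coeff x.2) < gp * gq / r ^ k₀ := by
    refine Valuation.map_sum_lt v (by positivity) (fun x hx => ?_)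
    obtain ⟨hxne, hxmem⟩ := Finset.mem_erase.mp hx
    have hxk : x.1 + x.2 = k₀ := Finset.HasAntidiagonal.mem_antidiagonal.mp hxmem
    have hlt : x.1 < i₀ ∨ x.2 < j₀ := by
      by_contra hcon
      push_neg at hcon
      obtain ⟨h1, h2⟩ := hcon
      have : x.1 = i₀ ∧ x.2 = j₀ := by omega
      exact hxne (Prod.ext this.1 this.2)
    rw [lt_div_iff₀ (pos_iff_ne_zero.mpr hrk), Valuation.map_mul, ← hxk, pow_add]
    have e : v (p.coeff x.1) * v (q.coeff x.2) * (r ^ x.1 * r ^ x.2)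
        = (v (p.coeff x.1) * r ^ x.1) * (v (q.coeff x.2) * r ^ x.2) := by ring
    rw [e]
    rcases hlt with h | h
    · calc (v (p.coeff x.1) * r ^ x.1) * (v (q.coeff x.2) * r ^ x.2)
          ≤ (v (p.coeff x.1) * r ^ x.1) * gq := mul_le_mul' le_rfl (gaussFun_coeff_le v r q x.2)
        _ < gp * gq := by
            exact mul_lt_mul_of_pos_right (hi₀min _ h) (pos_iff_ne_zero.mpr hgq)
    · calc (v (p.coeff x.1) * r ^ x.1) * (v (q.coeff x.2) * r ^ x.2)
          ≤ gp * (v (q.coeff x.2) * r ^ x.2) := mul_le_mul' (gaussFun_coeff_le v r p x.1) le_rfl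
        _ < gp * gq := by
            exact mul_lt_mul_of_pos_left (hj₀min _ h) (pos_iff_ne_zero.mpr hgp)
  have hval : v ((p * q).coeff k₀) = gp * gq / r ^ k₀ := by
    rw [hcoeff, Valuation.map_add_eq_of_lt_left _ (by rw [hmain]; exact hrest), hmain]
  have := gaussFun_coeff_le v r (p * q) k₀
  rw [hval, div_mul_cancel₀ _ hrk] at this
  exact this

/-- The Gauss valuation of radius `r ≠ 0` on `K[X]`. -/
def gaussVal (hr : r ≠ 0) : Valuation K[X] ℝ≥0 where
  toFun := gaussFun v r
  map_zero' := by simp [gaussFun]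
  map_one' := by simpa using gaussFun_C v r 1
  map_mul' := gaussFun_mul v hr
  map_add_le_max' := by
    intro p q
    refine gaussFun_le v (r := r) (fun k => ?_)
    rw [Polynomial.coeff_add]
    calc v (p.coeff k + q.coeff k) * r ^ k
        ≤ max (v (p.coeff k)) (v (q.coeff k)) * r ^ k :=
          mul_le_mul' (v.map_add _ _) le_rfl
      _ = max (v (p.coeff k) * r ^ k) (v (q.coeff k) * r ^ k) := (max_mul_mul_right _ _ _).symm
      _ ≤ max (gaussFun v r p) (gaussFun v r q) :=
          max_le_max (gaussFun_coeff_le v r p k) (gaussFun_coeff_le v r q k)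

end LafforgueAux

section Construction

variable {K : Type*} [Field K] (v : Valuation K ℝ≥0)
variable {R : Type*} [CommRing R] [Algebra K R]

/-- rpow juggling lemma -/
lemma rpow_pow_inv_mul {x : ℝ≥0} {m m' : ℕ} (hm : 0 < m) (hm' : 0 < m') :
    ((x ^ m') : ℝ≥0) ^ (((m : ℝ) * (m' : ℝ))⁻¹) = x ^ ((m : ℝ)⁻¹) := by
  have hmr : (m : ℝ) ≠ 0 := Nat.cast_ne_zero.mpr hm.ne'
  have hmr' : (m' : ℝ) ≠ 0 := Nat.cast_ne_zero.mpr hm'.ne'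
  rw [← NNReal.rpow_natCast x m', ← NNReal.rpow_mul]
  congr 1
  field_simp

/-- Given a field extension `L / F` which is algebraic (integral), an `ℝ≥0`-valued
valuation `G` on `F`, and a valuation subring `𝒪` of `L` dominating the image of the
valuation ring of `G`, there is an `ℝ≥0`-valued valuation on `L` extending `G`. -/
theorem exists_nnreal_valuation_of_dominates
    {F L : Type*} [Field F] [Field L] [Algebra F L] [Algebra.IsIntegral F L]
    (G : Valuation F ℝ≥0) (𝒪 : ValuationSubring L)
    (hdom : LocalSubring.map (algebraMap F L) G.valuationSubring.toLocalSubring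
      ≤ 𝒪.toLocalSubring) :
    ∃ W : Valuation L ℝ≥0, ∀ f : F, W (algebraMap F L f) = G f := by
  classical
  obtain ⟨hle, hloc⟩ := hdom
  set ι : F →+* L := algebraMap F L with hιdef
  set u := 𝒪.valuation with hu
  have hιinj : Function.Injective ι := ι.injective
  have hιne : ∀ {f : F}, f ≠ 0 → ι f ≠ 0 := by
    intro f hf h0
    exact hf (hιinj (h0.trans (map_zero ι).symm))
  have hGne : ∀ {f : F}, f ≠ 0 → G f ≠ 0 := fun hf => (Valuation.ne_zero_iff G).mpr hf
  have hOiff : ∀ f : F, f ∈ G.valuationSubring.toSubring ↔ G f ≤ 1 := fun f =>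
    (ValuationSubring.mem_toSubring _ _).trans (Valuation.mem_valuationSubring_iff G f)
  -- bridging lemmas between `G` and `u ∘ ι`
  have memO : ∀ f : F, G f ≤ 1 → ι f ∈ 𝒪 := by
    intro f hf
    refine hle ?_
    simp only [LocalSubring.map_toSubring]
    exact Subring.mem_map.mpr ⟨f, (hOiff f).mpr hf, rfl⟩
  have hii : ∀ f : F, G f < 1 → u (ι f) < 1 := by
    intro f hf
    have hmem : ι f ∈ 𝒪 := memO f hf.le
    rcases lt_or_eq_of_le (𝒪.valuation_le_one ⟨ι f, hmem⟩) with h | h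
    · exact h
    exfalso
    have hunit : IsUnit (⟨ι f, hmem⟩ : 𝒪) := (𝒪.valuation_eq_one_iff _).mpr h
    have hmem' : ι f ∈ (LocalSubring.map ι G.valuationSubring.toLocalSubring).toSubring := by
      simp only [LocalSubring.map_toSubring]
      exact Subring.mem_map.mpr ⟨f, (hOiff f).mpr hf.le, rfl⟩
    have hunit' : IsUnit
        (⟨ι f, hmem'⟩ : (LocalSubring.map ι G.valuationSubring.toLocalSubring).toSubring) := by
      refine hloc.map_nonunit _ ?_
      have e : (Subring.inclusion hle ⟨ι f, hmem'⟩) = ⟨ι f, hmem⟩ := Subtype.ext rfl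
      rw [e]
      exact hunit
    obtain ⟨b, hb⟩ := isUnit_iff_exists_inv.mp hunit'
    have hb1 : (ι f) * (b : L) = 1 := congrArg Subtype.val hb
    have hbmem := b.2
    simp only [LocalSubring.map_toSubring] at hbmem
    obtain ⟨g, hg, hgb⟩ := Subring.mem_map.mp hbmem
    have hfg : f * g = 1 := by
      apply hιinj
      rw [map_mul, map_one, hgb]
      exact hb1
    have hfg1 : G f * G g = 1 := by rw [← Valuation.map_mul, hfg, Valuation.map_one]
    have hGg : G g ≤ 1 := (hOiff g).mp hg
    have : (1:ℝ≥0) < 1 := by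
      calc (1:ℝ≥0) = G f * G g := hfg1.symm
      _ ≤ G f * 1 := mul_le_mul_right hGg _
      _ = G f := mul_one _
      _ < 1 := hf
    exact lt_irrefl _ this
  have hiii : ∀ f : F, f ≠ 0 → (G f ≤ 1 ↔ u (ι f) ≤ 1) := by
    intro f hf
    constructor
    · intro h
      exact 𝒪.valuation_le_one ⟨ι f, memO f h⟩
    · intro h
      by_contra hG
      push_neg at hG
      have hinv : G f⁻¹ < 1 := by
        rw [map_inv₀]
        exact (inv_lt_one₀ (zero_lt_one.trans hG)).mpr hG
      have huinv := hii _ hinv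
      rw [map_inv₀, map_inv₀] at huinv
      have hfne : u (ι f) ≠ 0 := (Valuation.ne_zero_iff u).mpr (hιne hf)
      have hlt : (1 : 𝒪.ValueGroup) < 1 := by
        calc (1 : 𝒪.ValueGroup) = u (ι f) * (u (ι f))⁻¹ := (mul_inv_cancel₀ hfne).symm
        _ ≤ 1 * (u (ι f))⁻¹ := mul_le_mul_left h _
        _ = (u (ι f))⁻¹ := one_mul _
        _ < 1 := huinv
      exact lt_irrefl _ hlt
  have hE1 : ∀ f : F, f ≠ 0 → (u (ι f) = 1 ↔ G f = 1) := by
    intro f hf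
    have hfne : u (ι f) ≠ 0 := (Valuation.ne_zero_iff u).mpr (hιne hf)
    have hfinv : u (ι f⁻¹) = (u (ι f))⁻¹ := by rw [map_inv₀, map_inv₀]
    constructor
    · intro h
      have h1 : G f ≤ 1 := (hiii f hf).mpr h.le
      rcases lt_or_eq_of_le h1 with h2 | h2
      · exact absurd (hii f h2) (by rw [h]; exact lt_irrefl 1)
      · exact h2
    · intro h
      have h1 : u (ι f) ≤ 1 := (hiii f hf).mp h.le
      have h2 : u (ι f⁻¹) ≤ 1 := (hiii f⁻¹ (inv_ne_zero hf)).mp (by rw [map_inv₀, h, inv_one])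
      rw [hfinv] at h2
      refine le_antisymm h1 ?_
      calc (1 : 𝒪.ValueGroup) = u (ι f) * (u (ι f))⁻¹ := (mul_inv_cancel₀ hfne).symm
      _ ≤ u (ι f) * 1 := mul_le_mul_right h2 _
      _ = u (ι f) := mul_one _
  -- the relation used to define the valuation on `L` by taking roots
  set Rel : L → ℕ → F → Prop := fun z m f => 0 < m ∧ f ≠ 0 ∧ u (z ^ m) = u (ι f) with hRel
  have hRel_exists : ∀ z : L, z ≠ 0 → ∃ mf : ℕ × F, Rel z mf.1 mf.2 := by
    intro z hz
    have hint : IsIntegral F z := Algebra.IsIntegral.isIntegral z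
    set q := minpoly F z with hqdef
    have hq0 : q ≠ 0 := minpoly.ne_zero hint
    have hc0 : q.coeff 0 ≠ 0 := minpoly.coeff_zero_ne_zero hint hz
    have hdeg : 0 < q.natDegree := minpoly.natDegree_pos hint
    have hne : q.support.Nonempty := ⟨0, Polynomial.mem_support_iff.mpr hc0⟩
    set term : ℕ → L := fun k => ι (q.coeff k) * z ^ k with hterm
    have hsum : ∑ k ∈ q.support, term k = 0 := by
      have := minpoly.aeval F z
      rwa [Polynomial.aeval_def, Polynomial.eval₂_eq_sum, Polynomial.sum_def] at this
    obtain ⟨j, hj, hjmax⟩ := Finset.exists_mem_eq_sup' hne (fun k => u (term k))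
    have hmax : ∀ k ∈ q.support, u (term k) ≤ u (term j) := by
      intro k hk
      rw [← hjmax]
      exact Finset.le_sup' (f := fun k => u (term k)) hk
    -- find a second index with the same value
    have hsecond : ∃ k ∈ q.support, k ≠ j ∧ u (term k) = u (term j) := by
      have herase : (q.support.erase j).Nonempty := by
        rcases eq_or_ne j 0 with rfl | hj0
        · exact ⟨q.natDegree, Finset.mem_erase.mpr ⟨hdeg.ne',
            Polynomial.natDegree_mem_support_of_nonzero hq0⟩⟩
        · exact ⟨0, Finset.mem_erase.mpr ⟨Ne.symm hj0, Polynomial.mem_support_iff.mpr hc0⟩⟩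
      have hjsum : term j = - ∑ i ∈ q.support.erase j, term i := by
        have h2 := Finset.add_sum_erase _ term hj
        rw [hsum] at h2
        exact eq_neg_of_add_eq_zero_left h2
      obtain ⟨k, hk, hkmax⟩ := Finset.exists_mem_eq_sup' herase (fun k => u (term k))
      have hkle : u (term j) ≤ u (term k) := by
        calc u (term j) = u (∑ i ∈ q.support.erase j, term i) := by
              rw [hjsum, Valuation.map_neg]
        _ ≤ (q.support.erase j).sup' herase (fun i => u (term i)) :=
              Valuation.map_sum_le u (fun i hi => Finset.le_sup' (f := fun i => u (term i)) hi)
        _ = u (term k) := hkmax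
      exact ⟨k, Finset.mem_of_mem_erase hk, (Finset.mem_erase.mp hk).1,
        le_antisymm (hmax k (Finset.mem_of_mem_erase hk)) hkle⟩
    obtain ⟨k, hks, hkj, hkeq⟩ := hsecond
    -- order the two indices
    obtain ⟨j₁, k₁, hj₁s, hk₁s, hlt, heq⟩ :
        ∃ j₁ k₁, j₁ ∈ q.support ∧ k₁ ∈ q.support ∧ k₁ < j₁ ∧ u (term j₁) = u (term k₁) := by
      rcases lt_or_gt_of_ne hkj with h | h
      · exact ⟨j, k, hj, hks, h, hkeq.symm⟩
      · exact ⟨k, j, hks, hj, h, hkeq⟩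
    have hcj : q.coeff j₁ ≠ 0 := Polynomial.mem_support_iff.mp hj₁s
    have hck : q.coeff k₁ ≠ 0 := Polynomial.mem_support_iff.mp hk₁s
    have hA : u (ι (q.coeff j₁)) ≠ 0 := (Valuation.ne_zero_iff u).mpr (hιne hcj)
    have hZk : u (z ^ k₁) ≠ 0 := (Valuation.ne_zero_iff u).mpr (pow_ne_zero _ hz)
    refine ⟨⟨j₁ - k₁, q.coeff k₁ / q.coeff j₁⟩, Nat.sub_pos_of_lt hlt,
      div_ne_zero hck hcj, ?_⟩
    have key : u (z ^ (j₁ - k₁)) * (u (ι (q.coeff j₁)) * u (z ^ k₁))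
        = (u (ι (q.coeff k₁)) / u (ι (q.coeff j₁))) * (u (ι (q.coeff j₁)) * u (z ^ k₁)) := by
      calc u (z ^ (j₁ - k₁)) * (u (ι (q.coeff j₁)) * u (z ^ k₁))
          = u (ι (q.coeff j₁)) * (u (z ^ (j₁ - k₁)) * u (z ^ k₁)) := mul_left_comm _ _ _
      _ = u (ι (q.coeff j₁)) * u (z ^ j₁) := by
          rw [← Valuation.map_mul u (z ^ (j₁ - k₁)), ← pow_add, Nat.sub_add_cancel hlt.le]
      _ = u (term j₁) := (Valuation.map_mul u _ _).symm
      _ = u (term k₁) := heq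
      _ = u (ι (q.coeff k₁)) * u (z ^ k₁) := Valuation.map_mul u _ _
      _ = (u (ι (q.coeff k₁)) / u (ι (q.coeff j₁))) * u (ι (q.coeff j₁)) * u (z ^ k₁) := by
          rw [div_mul_cancel₀ _ hA]
      _ = (u (ι (q.coeff k₁)) / u (ι (q.coeff j₁))) * (u (ι (q.coeff j₁)) * u (z ^ k₁)) :=
          mul_assoc _ _ _
    have := mul_right_cancel₀ (mul_ne_zero hA hZk) key
    rw [this, map_div₀, map_div₀]
  -- the valuation on `L`, defined by taking roots
  set w₀ : L → ℝ≥0 := fun z =>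
    if h : ∃ mf : ℕ × F, Rel z mf.1 mf.2 then
      (G h.choose.2) ^ (((h.choose.1 : ℕ) : ℝ)⁻¹) else 0 with hw₀
  have hRel_welldef : ∀ z : L, ∀ m m' : ℕ, ∀ f f' : F, Rel z m f → Rel z m' f' →
      (G f) ^ (((m : ℕ) : ℝ)⁻¹) = (G f') ^ (((m' : ℕ) : ℝ)⁻¹) := by
    rintro z m m' f f' ⟨hm, hf, hzf⟩ ⟨hm', hf', hzf'⟩
    have hUeq : u (ι (f ^ m' / f' ^ m)) = 1 := by
      have e1 : u (ι (f ^ m')) = u (ι (f' ^ m)) := by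
        have a1 : u (ι (f ^ m')) = u (z ^ (m * m')) := by
          rw [map_pow, Valuation.map_pow, ← hzf, ← Valuation.map_pow, ← pow_mul]
        have a2 : u (ι (f' ^ m)) = u (z ^ (m * m')) := by
          rw [map_pow, Valuation.map_pow, ← hzf', ← Valuation.map_pow, ← pow_mul, mul_comm m' m]
        rw [a1, a2]
      rw [map_div₀, map_div₀, e1]
      exact div_self ((Valuation.ne_zero_iff u).mpr (hιne (pow_ne_zero _ hf')))
    have hGeq : G (f ^ m') = G (f' ^ m) := by
      have h1 := (hE1 _ (div_ne_zero (pow_ne_zero _ hf) (pow_ne_zero _ hf'))).mp hUeq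
      rw [map_div₀] at h1
      exact (div_eq_one_iff_eq (hGne (pow_ne_zero _ hf'))).mp h1
    have hGm : (G f) ^ m' = (G f') ^ m := by
      rwa [Valuation.map_pow, Valuation.map_pow] at hGeq
    calc (G f) ^ ((m : ℝ))⁻¹ = ((G f) ^ m') ^ (((m : ℝ) * (m' : ℝ))⁻¹) :=
          (rpow_pow_inv_mul hm hm').symm
    _ = ((G f') ^ m) ^ (((m : ℝ) * (m' : ℝ))⁻¹) := by rw [hGm]
    _ = ((G f') ^ m) ^ (((m' : ℝ) * (m : ℝ))⁻¹) := by rw [mul_comm (m : ℝ)]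
    _ = (G f') ^ ((m' : ℝ))⁻¹ := rpow_pow_inv_mul hm' hm
  have hw₀_eq : ∀ z : L, ∀ m : ℕ, ∀ f : F, Rel z m f → w₀ z = (G f) ^ (((m : ℕ) : ℝ)⁻¹) := by
    intro z m f hrel
    have hex : ∃ mf : ℕ × F, Rel z mf.1 mf.2 := ⟨⟨m, f⟩, hrel⟩
    rw [hw₀]
    simp only [dif_pos hex]
    exact hRel_welldef z _ m _ f hex.choose_spec hrel
  have hw₀_zero : w₀ 0 = 0 := by
    rw [hw₀]
    refine dif_neg ?_
    rintro ⟨⟨m, f⟩, hm, hf, h⟩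
    rw [zero_pow hm.ne', Valuation.map_zero] at h
    exact (Valuation.ne_zero_iff u).mpr (hιne hf) h.symm
  have hw₀_ne : ∀ {z : L}, z ≠ 0 → w₀ z ≠ 0 := by
    intro z hz
    obtain ⟨⟨m, f⟩, hrel⟩ := hRel_exists z hz
    rw [hw₀_eq z m f hrel]
    intro h0
    rcases (NNReal.rpow_eq_zero_iff).mp h0 with ⟨h1, -⟩
    exact hGne hrel.2.1 h1
  have hw₀_mul : ∀ x z : L, w₀ (x * z) = w₀ x * w₀ z := by
    intro x z
    rcases eq_or_ne x 0 with rfl | hx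
    · rw [zero_mul, hw₀_zero, zero_mul]
    rcases eq_or_ne z 0 with rfl | hz
    · rw [mul_zero, hw₀_zero, mul_zero]
    obtain ⟨⟨m, f⟩, hm, hf, hrel⟩ := hRel_exists x hx
    obtain ⟨⟨m', f'⟩, hm', hf', hrel'⟩ := hRel_exists z hz
    have hrelmul : Rel (x * z) (m * m') (f ^ m' * f' ^ m) := by
      refine ⟨Nat.mul_pos hm hm', mul_ne_zero (pow_ne_zero _ hf) (pow_ne_zero _ hf'), ?_⟩
      have b1 : u ((x * z) ^ (m * m')) = u (x ^ m) ^ m' * u (z ^ m') ^ m := by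
        calc u ((x * z) ^ (m * m')) = u (x ^ (m * m') * z ^ (m * m')) := by rw [mul_pow]
        _ = u (x ^ (m * m')) * u (z ^ (m * m')) := Valuation.map_mul u _ _
        _ = u ((x ^ m) ^ m') * u ((z ^ m') ^ m) := by rw [pow_mul x, pow_mul' z]
        _ = u (x ^ m) ^ m' * u (z ^ m') ^ m := by
            rw [u.map_pow (x ^ m) m', u.map_pow (z ^ m') m]
      have b2 : u (ι (f ^ m' * f' ^ m)) = u (ι f) ^ m' * u (ι f') ^ m := by
        calc u (ι (f ^ m' * f' ^ m)) = u (ι (f ^ m') * ι (f' ^ m)) := by rw [map_mul]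
        _ = u (ι (f ^ m')) * u (ι (f' ^ m)) := Valuation.map_mul u _ _
        _ = u ((ι f) ^ m') * u ((ι f') ^ m) := by rw [map_pow ι f m', map_pow ι f' m]
        _ = u (ι f) ^ m' * u (ι f') ^ m := by
            rw [u.map_pow (ι f) m', u.map_pow (ι f') m]
      rw [b1, b2, hrel, hrel']
    rw [hw₀_eq _ _ _ hrelmul, hw₀_eq _ _ _ ⟨hm, hf, hrel⟩, hw₀_eq _ _ _ ⟨hm', hf', hrel'⟩]
    push_cast
    rw [Valuation.map_mul, NNReal.mul_rpow, Valuation.map_pow, Valuation.map_pow]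
    congr 1
    · exact rpow_pow_inv_mul hm hm'
    · rw [mul_comm (m : ℝ)]
      exact rpow_pow_inv_mul hm' hm
  have hw₀_one : w₀ 1 = 1 := by
    have hrel : Rel 1 1 1 := ⟨one_pos, one_ne_zero, by rw [pow_one, map_one ι]⟩
    rw [hw₀_eq _ _ _ hrel, Valuation.map_one, NNReal.one_rpow]
  have hw₀_mem : ∀ a : L, a ∈ 𝒪 → w₀ a ≤ 1 := by
    intro a ha
    rcases eq_or_ne a 0 with rfl | ha0
    · rw [hw₀_zero]; exact zero_le_one
    obtain ⟨⟨m, f⟩, hm, hf, hrel⟩ := hRel_exists a ha0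
    have hua : u a ≤ 1 := 𝒪.valuation_le_one ⟨a, ha⟩
    have huf : u (ι f) ≤ 1 := by
      rw [← hrel, Valuation.map_pow]
      exact pow_le_one' hua m
    have hGf : G f ≤ 1 := (hiii f hf).mpr huf
    rw [hw₀_eq _ _ _ ⟨hm, hf, hrel⟩]
    exact NNReal.rpow_le_one hGf (by positivity)
  have hw₀_add : ∀ x z : L, w₀ (x + z) ≤ max (w₀ x) (w₀ z) := by
    have main : ∀ x z : L, z ≠ 0 → x / z ∈ 𝒪 → w₀ (x + z) ≤ w₀ z := by
      intro x z hz hmem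
      have hdiv : (x + z) / z ∈ 𝒪 := by
        rw [add_div, div_self hz]
        exact add_mem hmem (one_mem _)
      have : w₀ (x + z) = w₀ ((x + z) / z) * w₀ z := by
        rw [← hw₀_mul, div_mul_cancel₀ _ hz]
      rw [this]
      calc w₀ ((x + z) / z) * w₀ z ≤ 1 * w₀ z := mul_le_mul_left (hw₀_mem _ hdiv) _
      _ = w₀ z := one_mul _
    intro x z
    rcases eq_or_ne x 0 with rfl | hx
    · rw [zero_add]; exact le_max_right _ _
    rcases eq_or_ne z 0 with rfl | hz
    · rw [add_zero]; exact le_max_left _ _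
    rcases 𝒪.mem_or_inv_mem (x / z) with h | h
    · exact le_trans (main x z hz h) (le_max_right _ _)
    · rw [inv_div] at h
      rw [add_comm]
      exact le_trans (main z x hx h) (le_max_left _ _)
  -- assemble the valuation and its extension property
  refine ⟨⟨⟨⟨w₀, hw₀_zero⟩, hw₀_one, hw₀_mul⟩, hw₀_add⟩, ?_⟩
  intro f
  rcases eq_or_ne f 0 with rfl | hf
  · show w₀ (ι 0) = G 0
    rw [map_zero, Valuation.map_zero]
    exact hw₀_zero
  have hrel : Rel (ι f) 1 f := ⟨one_pos, hf, by rw [pow_one]⟩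
  show w₀ (ι f) = G f
  rw [hw₀_eq _ _ _ hrel]
  simp

/-- Key existence result: given a transcendental element `y` in a finitely generated
`K`-algebra `R`, for every `r ≠ 0` there is a valuation on `R` extending `v` with value
`r` at `y`. -/
theorem exists_valuation_extension
    {K : Type*} [Field K] (v : Valuation K ℝ≥0)
    {R : Type*} [CommRing R] [Algebra K R]
    (s : Finset R) (hgen : Algebra.adjoin K (s : Set R) = ⊤)
    {y : R} (hy : Transcendental K y) {r : ℝ≥0} (hr : r ≠ 0) :
    ∃ w : Valuation R ℝ≥0, (∀ c : K, w (algebraMap K R c) = v c) ∧ w y = r := by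
  classical
  -- the Gauss valuation on `F₀ = K(X)`
  have hSupp : nonZeroDivisors K[X] ≤ (gaussVal v hr).supp.primeCompl := by
    intro p hp
    have hp0 : p ≠ 0 := mem_nonZeroDivisors_iff_ne_zero.mp hp
    show p ∉ (gaussVal v hr).supp
    rw [Valuation.mem_supp_iff]
    exact gaussFun_ne_zero v hr hp0
  set F₀ := FractionRing K[X] with hF₀
  set G : Valuation F₀ ℝ≥0 := (gaussVal v hr).extendToLocalization hSupp F₀ with hGdef
  have hGmap : ∀ p : K[X], G (algebraMap K[X] F₀ p) = gaussFun v r p := fun p =>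
    Valuation.extendToLocalization_apply_map_apply _ hSupp F₀ p
  -- localize `R` at the image of the nonzero polynomials and quotient by a maximal ideal
  set S : Submonoid R := Submonoid.map (Polynomial.aeval y : K[X] →ₐ[K] R).toRingHom.toMonoidHom
    (nonZeroDivisors K[X]) with hSdef
  have hS0 : (0 : R) ∉ S := by
    rintro ⟨p, hp, hp0⟩
    exact mem_nonZeroDivisors_iff_ne_zero.mp hp (transcendental_iff.mp hy p hp0)
  letI RS := Localization S
  haveI : Nontrivial RS := by
    refine nontrivial_of_ne 1 0 (fun h => ?_)
    rw [← map_one (algebraMap R RS), ← map_zero (algebraMap R RS)] at h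
    obtain ⟨c, hc⟩ := (IsLocalization.eq_iff_exists S RS).mp h
    simp only [mul_one, mul_zero] at hc
    exact hS0 (hc ▸ c.2)
  obtain ⟨M, hM⟩ := Ideal.exists_maximal RS
  letI L := RS ⧸ M
  letI : Field L := Ideal.Quotient.field M
  set κR : R →+* L := (Ideal.Quotient.mk M).comp (algebraMap R RS) with hκR
  set κ : Polynomial K →+* L := κR.comp (Polynomial.aeval y : K[X] →ₐ[K] R).toRingHom with hκ
  have hUnits : ∀ q : nonZeroDivisors K[X], IsUnit (κ q) := by
    intro q
    have hmem : Polynomial.aeval y (q : K[X]) ∈ S := ⟨q, q.2, rfl⟩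
    exact (IsLocalization.map_units RS ⟨_, hmem⟩).map (Ideal.Quotient.mk M)
  set ι : F₀ →+* L := IsLocalization.lift (M := nonZeroDivisors K[X]) hUnits with hιdef
  have hι : ∀ p : K[X], ι (algebraMap K[X] F₀ p) = κ p := fun p => IsLocalization.lift_eq hUnits p
  letI : Algebra F₀ L := ι.toAlgebra
  have halg : algebraMap F₀ L = ι := rfl
  -- `L` is generated over `F₀` by the image of `s`
  have hsub : ∀ x : R, κR x ∈ Algebra.adjoin F₀ ((s.image κR : Finset L) : Set L) := by
    intro x
    have hx : x ∈ Algebra.adjoin K (s : Set R) := by rw [hgen]; trivial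
    induction hx using Algebra.adjoin_induction with
    | mem z hz => exact Algebra.subset_adjoin (by simpa using Finset.mem_image_of_mem κR hz)
    | algebraMap c =>
        have e : κR (algebraMap K R c) = algebraMap F₀ L (algebraMap K[X] F₀ (Polynomial.C c)) := by
          rw [halg, hι]
          show _ = κR (Polynomial.aeval y (Polynomial.C c))
          rw [Polynomial.aeval_C]
        rw [e]
        exact Subalgebra.algebraMap_mem _ _
    | add a b _ _ ha hb => rw [map_add]; exact add_mem ha hb
    | mul a b _ _ ha hb => rw [map_mul]; exact mul_mem ha hb
  have hadj : Algebra.adjoin F₀ ((s.image κR : Finset L) : Set L) = ⊤ := by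
    rw [eq_top_iff]
    rintro z -
    obtain ⟨ξ, rfl⟩ := Ideal.Quotient.mk_surjective z
    obtain ⟨⟨a, t⟩, ht⟩ := IsLocalization.surj S ξ
    obtain ⟨q, hq, hqt⟩ := t.2
    have hqunit := hUnits ⟨q, hq⟩
    have hκq : κ q = κR (t : R) := congrArg κR hqt
    have hκqne : κR (t : R) ≠ 0 := by
      rw [← hκq]; exact hqunit.ne_zero
    have hz : Ideal.Quotient.mk M ξ = κR a * (κR (t : R))⁻¹ := by
      rw [eq_mul_inv_iff_mul_eq₀ hκqne]
      exact congrArg (Ideal.Quotient.mk M) ht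
    rw [hz]
    refine mul_mem (hsub a) ?_
    have : (κR (t : R))⁻¹ = algebraMap F₀ L (algebraMap K[X] F₀ q)⁻¹ := by
      rw [halg, map_inv₀, hι, hκq]
    rw [this]
    exact Subalgebra.algebraMap_mem _ _
  haveI : Algebra.FiniteType F₀ L := ⟨⟨s.image κR, hadj⟩⟩
  haveI : Module.Finite F₀ L := finite_of_finite_type_of_isJacobsonRing F₀ L
  haveI : Algebra.IsIntegral F₀ L := Algebra.IsIntegral.of_finite F₀ L
  -- Chevalley extension: dominate the image of the Gauss valuation ring
  obtain ⟨𝒪, hdom⟩ :=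
    (LocalSubring.map (algebraMap F₀ L) G.valuationSubring.toLocalSubring).exists_le_valuationSubring
  obtain ⟨W, hW⟩ := exists_nnreal_valuation_of_dominates G 𝒪 hdom
  refine ⟨W.comap κR, ?_, ?_⟩
  · intro c
    have e : κR (algebraMap K R c) = algebraMap F₀ L (algebraMap K[X] F₀ (Polynomial.C c)) := by
      rw [halg, hι]
      show _ = κR (Polynomial.aeval y (Polynomial.C c))
      rw [Polynomial.aeval_C]
    show W (κR (algebraMap K R c)) = v c
    rw [e, hW, hGmap, gaussFun_C]
  · have e : κR y = algebraMap F₀ L (algebraMap K[X] F₀ Polynomial.X) := by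
      rw [halg, hι]
      show _ = κR (Polynomial.aeval y Polynomial.X)
      rw [Polynomial.aeval_X]
    show W (κR y) = r
    rw [e, hW, hGmap, gaussFun_X]

end Construction


/-- **0-dimensional algebraic Lafforgue theorem.**
If `R` is a finitely generated `K`-algebra (with generators `T 1, …, T n`) over a
valued field `(K, v)`, and the set of tuples `(w (T 1), …, w (T n))` arising from
valuations (semi-valuations) `w : R → ℝ≥0` extending `v` is finite, then the set of
`K`-algebra homomorphisms `R → K` is finite. -/
theorem finite_algHom_of_finite_tropicalization
    (K : Type*) [Field K] (v : Valuation K ℝ≥0)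
    (R : Type*) [CommRing R] [Algebra K R]
    (n : ℕ) (T : Fin n → R)
    (hgen : Algebra.adjoin K (Set.range T) = ⊤)
    (hfin : {p : Fin n → ℝ≥0 | ∃ w : Valuation R ℝ≥0,
        (∀ c : K, w (algebraMap K R c) = v c) ∧ ∀ i, p i = w (T i)}.Finite) :
    Finite (R →ₐ[K] K) := by
  classical
  by_cases halg : ∀ i, IsAlgebraic K (T i)
  · -- all generators algebraic over `K`: maps are determined by roots
    choose p hp using halg
    have hroot : ∀ (φ : R →ₐ[K] K) (i : Fin n), φ (T i) ∈ (p i).rootSet K := by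
      intro φ i
      rw [Polynomial.mem_rootSet]
      refine ⟨(hp i).1, ?_⟩
      rw [Polynomial.aeval_algHom_apply, (hp i).2, map_zero]
    set Φ : (R →ₐ[K] K) → (∀ i : Fin n, (p i).rootSet K) :=
      fun φ i => ⟨φ (T i), hroot φ i⟩ with hΦ
    have hinj : Function.Injective Φ := by
      intro φ ψ h
      have hTeq : ∀ i, φ (T i) = ψ (T i) := by
        intro i
        have := congrFun h i
        exact Subtype.ext_iff.mp this
      have hle : Algebra.adjoin K (Set.range T) ≤ AlgHom.equalizer φ ψ := by
        refine Algebra.adjoin_le ?_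
        rintro x ⟨i, rfl⟩
        exact hTeq i
      rw [hgen] at hle
      exact AlgHom.ext fun x => hle (by trivial)
    exact Finite.of_injective Φ hinj
  · -- some generator is transcendental: contradiction with finiteness
    push_neg at halg
    obtain ⟨i₀, hi₀⟩ := halg
    have hy : Transcendental K (T i₀) := hi₀
    have hgen' : Algebra.adjoin K ((Finset.univ.image T : Finset R) : Set R) = ⊤ := by
      rw [Finset.coe_image, Finset.coe_univ, Set.image_univ]
      exact hgen
    have H : ∀ m : ℕ, ∃ w : Valuation R ℝ≥0,
        (∀ c : K, w (algebraMap K R c) = v c) ∧ w (T i₀) = ((m : ℝ≥0) + 1) := by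
      intro m
      exact exists_valuation_extension v _ hgen' hy (by positivity)
    choose w hw1 hw2 using H
    have hginj : Function.Injective (fun m : ℕ => fun i : Fin n => w m (T i)) := by
      intro m m' h
      have := congrFun h i₀
      simp only at this
      rw [hw2 m, hw2 m'] at this
      have : (m : ℝ≥0) = (m' : ℝ≥0) := by
        exact add_right_cancel this
      exact_mod_cast this
    have hmem : ∀ m : ℕ, (fun i : Fin n => w m (T i)) ∈
        {p : Fin n → ℝ≥0 | ∃ w : Valuation R ℝ≥0,
          (∀ c : K, w (algebraMap K R c) = v c) ∧ ∀ i, p i = w (T i)} :=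
      fun m => ⟨w m, hw1 m, fun i => rfl⟩
    exact absurd hfin (Set.infinite_of_injective_forall_mem hginj hmem)
end

section
/- Let K be a field equipped with a valuation v : K → ℝ≥0, and let R be a commutative K-algebra generated as a K-algebra by finitely many elements T₁, …, Tₙ. If the set { (w(T₁), …, w(Tₙ)) ∈ (ℝ≥0)ⁿ : w is a valuation on R (in the sense of Mathlib's Valuation R ℝ≥0) satisfying w(algebraMap K R c) = v(c) for all c ∈ K } is finite, then the Krull dimension of the ring R is at most 0. -/
set_option maxHeartbeats 1000000
set_option synthInstance.maxHeartbeats 400000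
open scoped NNReal
open Polynomial

namespace BGaux


variable {K : Type*} [Field K] (v : Valuation K ℝ≥0) (t : ℝ≥0)

noncomputable def gaussFn (f : K[X]) : ℝ≥0 := f.support.sup fun i => v (f.coeff i) * t ^ i

lemma term_le_gaussFn (f : K[X]) (i : ℕ) : v (f.coeff i) * t ^ i ≤ gaussFn v t f := by
  by_cases h : i ∈ f.support
  · exact Finset.le_sup (f := fun i => v (f.coeff i) * t ^ i) h
  · simp [Polynomial.notMem_support_iff.mp h]

lemma gaussFn_le {f : K[X]} {M : ℝ≥0} (h : ∀ i, v (f.coeff i) * t ^ i ≤ M) :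
    gaussFn v t f ≤ M :=
  Finset.sup_le fun i _ => h i

lemma gaussFn_C (c : K) : gaussFn v t (C c) = v c := by
  refine le_antisymm (gaussFn_le v t fun i => ?_) ?_
  · rcases eq_or_ne i 0 with rfl | h
    · simp
    · simp [coeff_C, h]
  · simpa using term_le_gaussFn v t (C c) 0

lemma gaussFn_zero : gaussFn v t 0 = 0 := by simp [gaussFn]

lemma gaussFn_pos (ht : t ≠ 0) {f : K[X]} (hf : f ≠ 0) : 0 < gaussFn v t f := by
  refine lt_of_lt_of_le ?_ (term_le_gaussFn v t f f.natDegree)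
  have h1 : v (f.coeff f.natDegree) ≠ 0 := by
    rw [Valuation.ne_zero_iff]
    simpa using mt leadingCoeff_eq_zero.mp hf
  positivity

lemma gaussFn_mul (ht : t ≠ 0) (f g : K[X]) :
    gaussFn v t (f * g) = gaussFn v t f * gaussFn v t g := by
  rcases eq_or_ne f 0 with rfl | hf
  · simp [gaussFn_zero]
  rcases eq_or_ne g 0 with rfl | hg
  · simp [gaussFn_zero]
  have hMf := gaussFn_pos v t ht hf
  have hMg := gaussFn_pos v t ht hg
  have hex_f : ∃ i, v (f.coeff i) * t ^ i = gaussFn v t f := by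
    obtain ⟨i, hi, h⟩ := Finset.exists_mem_eq_sup f.support
      (Polynomial.support_nonempty.mpr hf) (fun i => v (f.coeff i) * t ^ i)
    exact ⟨i, h.symm⟩
  have hex_g : ∃ j, v (g.coeff j) * t ^ j = gaussFn v t g := by
    obtain ⟨i, hi, h⟩ := Finset.exists_mem_eq_sup g.support
      (Polynomial.support_nonempty.mpr hg) (fun i => v (g.coeff i) * t ^ i)
    exact ⟨i, h.symm⟩
  set i₀ := Nat.find hex_f with hi₀def
  set j₀ := Nat.find hex_g with hj₀def
  have hi₀ : v (f.coeff i₀) * t ^ i₀ = gaussFn v t f := Nat.find_spec hex_f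
  have hj₀ : v (g.coeff j₀) * t ^ j₀ = gaussFn v t g := Nat.find_spec hex_g
  have hi₀lt : ∀ i < i₀, v (f.coeff i) * t ^ i < gaussFn v t f := fun i hi =>
    lt_of_le_of_ne (term_le_gaussFn v t f i) (Nat.find_min hex_f hi)
  have hj₀lt : ∀ j < j₀, v (g.coeff j) * t ^ j < gaussFn v t g := fun j hj =>
    lt_of_le_of_ne (term_le_gaussFn v t g j) (Nat.find_min hex_g hj)
  -- key coefficient computation
  have key : v ((f * g).coeff (i₀ + j₀)) * t ^ (i₀ + j₀) = gaussFn v t f * gaussFn v t g := by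
    rw [coeff_mul]
    have hmem : (i₀, j₀) ∈ Finset.HasAntidiagonal.antidiagonal (i₀ + j₀) := by
      simp [Finset.HasAntidiagonal.mem_antidiagonal]
    rw [← Finset.add_sum_erase _ _ hmem]
    have hmain : v (f.coeff i₀ * g.coeff j₀) * t ^ (i₀ + j₀)
        = gaussFn v t f * gaussFn v t g := by
      rw [Valuation.map_mul, pow_add]
      rw [← hi₀, ← hj₀]; ring
    have hmainne : v (f.coeff i₀ * g.coeff j₀) ≠ 0 := by
      intro h; rw [h, zero_mul] at hmain
      exact (mul_pos hMf hMg).ne' hmain.symm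
    have hrest : v (∑ x ∈ (Finset.HasAntidiagonal.antidiagonal (i₀ + j₀)).erase (i₀, j₀),
        f.coeff x.1 * g.coeff x.2) < v (f.coeff i₀ * g.coeff j₀) := by
      apply Valuation.map_sum_lt _ hmainne
      intro x hx
      obtain ⟨hne, hx⟩ := Finset.mem_erase.mp hx
      have hsum : x.1 + x.2 = i₀ + j₀ := Finset.HasAntidiagonal.mem_antidiagonal.mp hx
      have hlt : v (f.coeff x.1) * t ^ x.1 * (v (g.coeff x.2) * t ^ x.2)
          < gaussFn v t f * gaussFn v t g := by
        rcases lt_or_ge x.1 i₀ with h1 | h1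
        · calc v (f.coeff x.1) * t ^ x.1 * (v (g.coeff x.2) * t ^ x.2)
              ≤ v (f.coeff x.1) * t ^ x.1 * gaussFn v t g :=
                mul_le_mul_right (term_le_gaussFn v t g x.2) _
            _ < gaussFn v t f * gaussFn v t g :=
                mul_lt_mul_of_pos_right (hi₀lt _ h1) hMg
        · have h2 : x.2 < j₀ := by
            rcases lt_or_eq_of_le h1 with h1 | h1
            · omega
            · exfalso; apply hne; rw [Prod.ext_iff]; constructor <;> simp <;> omega
          calc v (f.coeff x.1) * t ^ x.1 * (v (g.coeff x.2) * t ^ x.2)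
              ≤ gaussFn v t f * (v (g.coeff x.2) * t ^ x.2) :=
                mul_le_mul_left (term_le_gaussFn v t f x.1) _
            _ < gaussFn v t f * gaussFn v t g :=
                mul_lt_mul_of_pos_left (hj₀lt _ h2) hMf
      have ht0 : (0:ℝ≥0) < t ^ (i₀ + j₀) := pow_pos (pos_iff_ne_zero.mpr ht) _
      have := hlt
      rw [show v (f.coeff x.1) * t ^ x.1 * (v (g.coeff x.2) * t ^ x.2)
          = v (f.coeff x.1) * v (g.coeff x.2) * (t ^ x.1 * t ^ x.2) by ring,
        ← pow_add, hsum] at this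
      rw [← hmain] at this
      rw [Valuation.map_mul]
      exact lt_of_mul_lt_mul_right this (le_of_lt ht0)
    rw [Valuation.map_add_eq_of_lt_left _ hrest, hmain]
  refine le_antisymm (gaussFn_le v t fun n => ?_) (key ▸ term_le_gaussFn v t (f * g) (i₀ + j₀))
  rw [coeff_mul]
  calc v (∑ x ∈ Finset.HasAntidiagonal.antidiagonal n, f.coeff x.1 * g.coeff x.2) * t ^ n
      ≤ (gaussFn v t f * gaussFn v t g) / t ^ n * t ^ n := by
        apply mul_le_mul_left
        apply Valuation.map_sum_le
        intro x hx
        have hsum : x.1 + x.2 = n := Finset.HasAntidiagonal.mem_antidiagonal.mp hx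
        rw [Valuation.map_mul, le_div_iff₀ (pow_pos (pos_iff_ne_zero.mpr ht) n), ← hsum,
          pow_add]
        calc v (f.coeff x.1) * v (g.coeff x.2) * (t ^ x.1 * t ^ x.2)
            = (v (f.coeff x.1) * t ^ x.1) * (v (g.coeff x.2) * t ^ x.2) := by ring
          _ ≤ gaussFn v t f * gaussFn v t g :=
            mul_le_mul' (term_le_gaussFn v t f x.1) (term_le_gaussFn v t g x.2)
    _ = gaussFn v t f * gaussFn v t g := by
        rw [div_mul_cancel₀]
        exact (pow_pos (pos_iff_ne_zero.mpr ht) n).ne'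

noncomputable def gaussVal (ht : t ≠ 0) : Valuation K[X] ℝ≥0 where
  toFun := gaussFn v t
  map_zero' := gaussFn_zero v t
  map_one' := by simpa using gaussFn_C v t 1
  map_mul' := gaussFn_mul v t ht
  map_add_le_max' := fun f g => by
    apply gaussFn_le
    intro i
    rw [coeff_add]
    calc v (f.coeff i + g.coeff i) * t ^ i
        ≤ max (v (f.coeff i)) (v (g.coeff i)) * t ^ i :=
          mul_le_mul_left (v.map_add _ _) _
      _ = max (v (f.coeff i) * t ^ i) (v (g.coeff i) * t ^ i) := (max_mul_mul_right _ _ _).symm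
      _ ≤ max (gaussFn v t f) (gaussFn v t g) :=
          max_le_max (term_le_gaussFn v t f i) (term_le_gaussFn v t g i)

lemma gaussVal_C (ht : t ≠ 0) (c : K) : gaussVal v t ht (C c) = v c := gaussFn_C v t c

lemma gaussVal_X (ht : t ≠ 0) : gaussVal v t ht X = t := by
  show gaussFn v t X = t
  refine le_antisymm (gaussFn_le v t fun i => ?_) ?_
  · rcases eq_or_ne i 1 with rfl | h
    · simp
    · simp [coeff_X, Ne.symm h]
  · simpa using term_le_gaussFn v t X 1

lemma gaussVal_ne_zero (ht : t ≠ 0) {f : K[X]} (hf : f ≠ 0) : gaussVal v t ht f ≠ 0 :=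
  (gaussFn_pos v t ht hf).ne'



theorem exists_valuation_extension {F L : Type*} [Field F] [Field L] [Algebra F L]
    [Algebra.IsIntegral F L] (w : Valuation F ℝ≥0) :
    ∃ W : Valuation L ℝ≥0, ∀ a : F, W (algebraMap F L a) = w a := by
  classical
  set O := w.valuationSubring with hO
  let f : O →+* L := (algebraMap F L).comp O.subtype
  obtain ⟨B, hB⟩ := (LocalSubring.range f).exists_le_valuationSubring
  obtain ⟨hsub, hloc⟩ := hB
  have halg_inj : Function.Injective (algebraMap F L) := (algebraMap F L).injective
  -- membership correspondence
  have hmemB : ∀ a : F, w a ≤ 1 → algebraMap F L a ∈ B := by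
    intro a ha
    have : algebraMap F L a ∈ (LocalSubring.range f).toSubring := ⟨⟨a, ha⟩, rfl⟩
    exact hsub this
  have hwle : ∀ a : F, algebraMap F L a ∈ B → w a ≤ 1 := by
    intro a ha
    by_contra hlt
    push_neg at hlt
    have ha0 : a ≠ 0 := by rintro rfl; simp at hlt
    have hainv : w a⁻¹ < 1 := by
      rw [map_inv₀]
      exact inv_lt_one_of_one_lt₀ hlt
    -- x := a⁻¹ as an element of O
    set x : O := ⟨a⁻¹, le_of_lt hainv⟩ with hx
    have hxmem : algebraMap F L a⁻¹ ∈ (LocalSubring.range f).toSubring := ⟨x, rfl⟩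
    set x' : (LocalSubring.range f).toSubring := ⟨algebraMap F L a⁻¹, hxmem⟩ with hx'
    have hunit : IsUnit (Subring.inclusion hsub x') := by
      rw [isUnit_iff_exists_inv]
      refine ⟨⟨algebraMap F L a, ha⟩, ?_⟩
      ext
      show algebraMap F L a⁻¹ * algebraMap F L a = 1
      rw [← map_mul, inv_mul_cancel₀ ha0, map_one]
    have hxunit : IsUnit x' := hloc.1 x' hunit
    -- transfer unit-ness back to O
    have hfinj : Function.Injective f := by
      intro y z h
      exact Subtype.ext (halg_inj congr(($h : _)))
    obtain ⟨u, hu⟩ := hxunit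
    -- u : units of the range subring; produce an inverse of x in O
    have hu1 : (u.val : L) * (u.inv : L) = 1 := by
      have := u.val_inv
      exact congr(((($this) : (LocalSubring.range f).toSubring) : L))
    obtain ⟨z, hz⟩ := u.inv.2
    have hz' : algebraMap F L (z : F) = ((u.inv : (LocalSubring.range f).toSubring) : L) := hz
    have hxz : a⁻¹ * (z : F) = 1 := by
      apply halg_inj
      rw [map_mul, map_one]
      have hthis : (u.val : L) = algebraMap F L a⁻¹ := congr((($hu : _) : L))
      calc algebraMap F L a⁻¹ * algebraMap F L (z : F)
          = (u.val : L) * (u.inv : L) := by rw [← hthis, hz']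
        _ = 1 := hu1
    have hza : (z : F) = a := by
      field_simp at hxz
      linear_combination hxz
    have : w a ≤ 1 := hza ▸ z.2
    exact absurd this (not_le.mpr hlt)
  -- torsion: every nonzero element has a power with the same B-valuation as a base element
  have hpow : ∀ b : L, b ≠ 0 → ∃ n : ℕ, 0 < n ∧ ∃ c : F, c ≠ 0 ∧
      B.valuation (b ^ n) = B.valuation (algebraMap F L c) := by
    intro b hb
    obtain ⟨P, hPmonic, hP⟩ := (Algebra.IsIntegral.isIntegral (R := F) b)
    have hPne : P ≠ 0 := hPmonic.ne_zero
    have hsum : ∑ i ∈ P.support, algebraMap F L (P.coeff i) * b ^ i = 0 := by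
      rw [← hP, Polynomial.eval₂_eq_sum, Polynomial.sum_def]
    have hne : P.support.Nonempty := Polynomial.support_nonempty.mpr hPne
    have hterm : ∀ i ∈ P.support, B.valuation (algebraMap F L (P.coeff i) * b ^ i) ≠ 0 := by
      intro i hi
      rw [Valuation.ne_zero_iff]
      exact mul_ne_zero (fun h => Polynomial.mem_support_iff.mp hi (halg_inj (by simpa using h)))
        (pow_ne_zero _ hb)
    obtain ⟨i₀, hi₀mem, hi₀max⟩ := Finset.exists_max_image P.support
      (fun i => B.valuation (algebraMap F L (P.coeff i) * b ^ i)) hne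
    have hj : ∃ j ∈ P.support, j ≠ i₀ ∧
        B.valuation (algebraMap F L (P.coeff j) * b ^ j)
          = B.valuation (algebraMap F L (P.coeff i₀) * b ^ i₀) := by
      by_contra hnot
      push_neg at hnot
      have hrest : B.valuation (∑ j ∈ P.support.erase i₀,
          algebraMap F L (P.coeff j) * b ^ j)
          < B.valuation (algebraMap F L (P.coeff i₀) * b ^ i₀) := by
        apply Valuation.map_sum_lt _ (hterm i₀ hi₀mem)
        intro j hj
        exact lt_of_le_of_ne (hi₀max j (Finset.mem_of_mem_erase hj))
          (hnot j (Finset.mem_of_mem_erase hj) (Finset.ne_of_mem_erase hj))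
      have h0 : algebraMap F L (P.coeff i₀) * b ^ i₀
          = - ∑ j ∈ P.support.erase i₀, algebraMap F L (P.coeff j) * b ^ j := by
        have := Finset.add_sum_erase P.support
          (fun j => algebraMap F L (P.coeff j) * b ^ j) hi₀mem
        rw [hsum] at this
        linear_combination this
      rw [h0, Valuation.map_neg] at hrest
      exact lt_irrefl _ hrest
    obtain ⟨j, hjmem, hjne, hjeq⟩ := hj
    have hbne : B.valuation b ≠ 0 := (Valuation.ne_zero_iff _).mpr hb
    have hcne : ∀ i ∈ P.support, B.valuation (algebraMap F L (P.coeff i)) ≠ 0 := by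
      intro i hi
      rw [Valuation.ne_zero_iff]
      exact fun h => Polynomial.mem_support_iff.mp hi (halg_inj (by simpa using h))
    -- helper to produce the result from an ordered pair
    have main : ∀ u v' : ℕ, u ∈ P.support → v' ∈ P.support → u < v' →
        B.valuation (algebraMap F L (P.coeff u) * b ^ u)
          = B.valuation (algebraMap F L (P.coeff v') * b ^ v') →
        ∃ n : ℕ, 0 < n ∧ ∃ c : F, c ≠ 0 ∧
          B.valuation (b ^ n) = B.valuation (algebraMap F L c) := by
      intro u v' hu hv huv heq
      refine ⟨v' - u, by omega, P.coeff u / P.coeff v', ?_, ?_⟩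
      · exact div_ne_zero (Polynomial.mem_support_iff.mp hu) (Polynomial.mem_support_iff.mp hv)
      · have hXu : B.valuation (b ^ u) ≠ 0 := (Valuation.ne_zero_iff _).mpr (pow_ne_zero _ hb)
        rw [Valuation.map_mul, Valuation.map_mul] at heq
        have hsplit : B.valuation (b ^ v') = B.valuation (b ^ (v' - u)) * B.valuation (b ^ u) := by
          rw [← Valuation.map_mul, pow_sub_mul_pow b (le_of_lt huv)]
        rw [hsplit, ← mul_assoc] at heq
        have heq2 := mul_right_cancel₀ hXu heq
        rw [map_div₀, Valuation.map_div, heq2, mul_div_cancel_left₀ _ (hcne v' hv)]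
    rcases lt_or_gt_of_ne hjne with h | h
    · exact main j i₀ hjmem hi₀mem h hjeq
    · exact main i₀ j hi₀mem hjmem h hjeq.symm
  -- the extension function
  set Wfn : L → ℝ≥0 := fun b =>
    if hb : b = 0 then 0 else
      (w ((hpow b hb).choose_spec.2.choose)) ^ (((hpow b hb).choose : ℝ)⁻¹) with hWfn
  -- pow injectivity helper
  have hpowinj : ∀ (k : ℕ), k ≠ 0 → ∀ a b : ℝ≥0, a ^ k = b ^ k → a = b := by
    intro k hk a b h
    have hk' : (k : ℝ) ≠ 0 := Nat.cast_ne_zero.mpr hk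
    calc a = (a ^ k) ^ ((k:ℝ)⁻¹) := by
            rw [← NNReal.rpow_natCast a k, ← NNReal.rpow_mul, mul_inv_cancel₀ hk',
              NNReal.rpow_one]
      _ = (b ^ k) ^ ((k:ℝ)⁻¹) := by rw [h]
      _ = b := by
            rw [← NNReal.rpow_natCast b k, ← NNReal.rpow_mul, mul_inv_cancel₀ hk',
              NNReal.rpow_one]
  -- the cross/well-definedness lemma
  have haux : ∀ b : L, b ≠ 0 → ∀ n : ℕ, 0 < n → ∀ c : F, c ≠ 0 →
      B.valuation (b ^ n) = B.valuation (algebraMap F L c) →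
      ∀ n' : ℕ, 0 < n' → ∀ c' : F, c' ≠ 0 →
      B.valuation (b ^ n') = B.valuation (algebraMap F L c') →
      (w c' ^ ((n' : ℝ)⁻¹)) ^ n = w c := by
    intro b hb n hn c hc h n' hn'pos c' hc'ne h'
    -- vB (alg (c^n')) = vB (alg (c'^n))
    have hkey : B.valuation (algebraMap F L (c ^ n')) = B.valuation (algebraMap F L (c' ^ n)) := by
      rw [map_pow (algebraMap F L) c n', map_pow (algebraMap F L) c' n,
        map_pow B.valuation (algebraMap F L c) n', map_pow B.valuation (algebraMap F L c') n,
        ← h, ← h', ← map_pow B.valuation (b ^ n) n', ← map_pow B.valuation (b ^ n') n,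
        ← pow_mul, ← pow_mul, mul_comm n n']
    -- hence w (c^n') = w (c'^n)
    have hd : w (c ^ n' / c' ^ n) = 1 := by
      have hBval : B.valuation (algebraMap F L (c ^ n' / c' ^ n)) = 1 := by
        rw [map_div₀, Valuation.map_div, hkey, div_self]
        rw [Valuation.ne_zero_iff]
        simpa using pow_ne_zero n hc'ne
      have h1 : algebraMap F L (c ^ n' / c' ^ n) ∈ B :=
        B.mem_of_valuation_le_one _ (le_of_eq hBval)
      have h2 : algebraMap F L (c ^ n' / c' ^ n)⁻¹ ∈ B := by
        apply B.mem_of_valuation_le_one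
        rw [map_inv₀, Valuation.map_inv, hBval, inv_one]
      have hw1 := hwle _ h1
      have hw2 := hwle _ h2
      rw [map_inv₀] at hw2
      have hne : w (c ^ n' / c' ^ n) ≠ 0 := by
        rw [Valuation.ne_zero_iff]
        exact div_ne_zero (pow_ne_zero _ hc) (pow_ne_zero _ hc'ne)
      refine le_antisymm hw1 ?_
      calc (1:ℝ≥0) = w (c ^ n' / c' ^ n) * (w (c ^ n' / c' ^ n))⁻¹ := (mul_inv_cancel₀ hne).symm
        _ ≤ w (c ^ n' / c' ^ n) * 1 := mul_le_mul_right hw2 _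
        _ = w (c ^ n' / c' ^ n) := mul_one _
    have hE : w c ^ n' = w c' ^ n := by
      rw [map_div₀, div_eq_one_iff_eq] at hd
      · rw [map_pow, map_pow] at hd; exact hd
      · rw [map_pow]
        exact pow_ne_zero _ ((Valuation.ne_zero_iff w).mpr hc'ne)
    have hn'R : ((n' : ℝ)) ≠ 0 := Nat.cast_ne_zero.mpr hn'pos.ne'
    calc (w c' ^ ((n':ℝ)⁻¹)) ^ n
        = (w c' ^ ((n':ℝ)⁻¹)) ^ ((n:ℕ):ℝ) := by rw [NNReal.rpow_natCast]
      _ = w c' ^ ((n':ℝ)⁻¹ * n) := by rw [← NNReal.rpow_mul]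
      _ = w c' ^ ((n:ℝ) * (n':ℝ)⁻¹) := by ring_nf
      _ = (w c' ^ ((n:ℕ):ℝ)) ^ ((n':ℝ)⁻¹) := by rw [NNReal.rpow_mul]
      _ = (w c' ^ n) ^ ((n':ℝ)⁻¹) := by rw [NNReal.rpow_natCast]
      _ = (w c ^ n') ^ ((n':ℝ)⁻¹) := by rw [hE]
      _ = (w c ^ ((n':ℕ):ℝ)) ^ ((n':ℝ)⁻¹) := by rw [NNReal.rpow_natCast]
      _ = w c ^ ((n':ℝ) * (n':ℝ)⁻¹) := by rw [← NNReal.rpow_mul]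
      _ = w c := by rw [mul_inv_cancel₀ hn'R, NNReal.rpow_one]
  have hcross : ∀ b : L, ∀ hb : b ≠ 0, ∀ n : ℕ, 0 < n → ∀ c : F, c ≠ 0 →
      B.valuation (b ^ n) = B.valuation (algebraMap F L c) → Wfn b ^ n = w c := by
    intro b hb n hn c hc h
    have h1 := (hpow b hb).choose_spec.1
    have h2 := (hpow b hb).choose_spec.2.choose_spec.1
    have h3 := (hpow b hb).choose_spec.2.choose_spec.2
    have hWb : Wfn b = w ((hpow b hb).choose_spec.2.choose)
        ^ ((((hpow b hb).choose : ℕ) : ℝ)⁻¹) := by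
      rw [hWfn]; simp only [dif_neg hb]
    rw [hWb]
    exact haux b hb n hn c hc h _ h1 _ h2 h3
  -- basic properties
  have hWspec : ∀ b : L, ∀ hb : b ≠ 0, ∃ n : ℕ, 0 < n ∧ ∃ c : F, c ≠ 0 ∧
      B.valuation (b ^ n) = B.valuation (algebraMap F L c) ∧ Wfn b ^ n = w c := by
    intro b hb
    obtain ⟨n, hn, c, hc, h⟩ := hpow b hb
    exact ⟨n, hn, c, hc, h, hcross b hb n hn c hc h⟩
  have hWne : ∀ b : L, b ≠ 0 → Wfn b ≠ 0 := by
    intro b hb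
    obtain ⟨n, hn, c, hc, -, h⟩ := hWspec b hb
    intro h0
    rw [h0, zero_pow hn.ne'] at h
    exact ((Valuation.ne_zero_iff w).mpr hc) h.symm
  have hWzero : Wfn 0 = 0 := by rw [hWfn]; simp
  have hWext : ∀ a : F, Wfn (algebraMap F L a) = w a := by
    intro a
    rcases eq_or_ne a 0 with rfl | ha
    · rw [map_zero, hWzero, map_zero]
    · have hb : algebraMap F L a ≠ 0 := by simpa using ha
      have := hcross (algebraMap F L a) hb 1 one_pos a ha (by rw [pow_one])
      rwa [pow_one] at this
  have hWone : Wfn 1 = 1 := by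
    have := hWext 1
    rwa [map_one, map_one] at this
  have hWmul : ∀ a b : L, Wfn (a * b) = Wfn a * Wfn b := by
    intro a b
    rcases eq_or_ne a 0 with rfl | ha
    · rw [zero_mul, hWzero, zero_mul]
    rcases eq_or_ne b 0 with rfl | hb
    · rw [mul_zero, hWzero, mul_zero]
    have hab : a * b ≠ 0 := mul_ne_zero ha hb
    obtain ⟨n, hn, c, hc, hrel, hval⟩ := hWspec a ha
    obtain ⟨m, hm, d, hd, hrel', hval'⟩ := hWspec b hb
    have hrel2 : B.valuation ((a * b) ^ (n * m)) = B.valuation (algebraMap F L (c ^ m * d ^ n)) := by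
      have e1 : (a * b) ^ (n * m) = (a ^ n) ^ m * (b ^ m) ^ n := by
        rw [mul_pow, ← pow_mul, ← pow_mul, mul_comm m n]
      have e2 : algebraMap F L (c ^ m * d ^ n)
          = (algebraMap F L c) ^ m * (algebraMap F L d) ^ n := by
        rw [map_mul, map_pow, map_pow]
      rw [e1, e2, map_mul, map_mul, map_pow B.valuation (a ^ n) m,
        map_pow B.valuation (b ^ m) n, hrel, hrel',
        map_pow B.valuation (algebraMap F L c) m, map_pow B.valuation (algebraMap F L d) n]
    have h1 : Wfn (a * b) ^ (n * m) = w (c ^ m * d ^ n) :=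
      hcross _ hab (n * m) (Nat.mul_pos hn hm) _
        (mul_ne_zero (pow_ne_zero _ hc) (pow_ne_zero _ hd)) hrel2
    have h2 : (Wfn a * Wfn b) ^ (n * m) = w (c ^ m * d ^ n) := by
      rw [mul_pow, map_mul, map_pow, map_pow, ← hval, ← hval',
        ← pow_mul, ← pow_mul, mul_comm m n]
    exact hpowinj (n * m) (Nat.mul_pos hn hm).ne' _ _ (h1.trans h2.symm)
  have hWle_one : ∀ b : L, b ≠ 0 → b ∈ B → Wfn b ≤ 1 := by
    intro b hb hbB
    obtain ⟨n, hn, c, hc, hrel, hval⟩ := hWspec b hb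
    have h1 : B.valuation (b ^ n) ≤ 1 := by
      rw [Valuation.map_pow]
      exact pow_le_one' (B.valuation_le_one ⟨b, hbB⟩) n
    have h2 : algebraMap F L c ∈ B := B.mem_of_valuation_le_one _ (hrel ▸ h1)
    have h3 : w c ≤ 1 := hwle _ h2
    by_contra hgt
    push_neg at hgt
    have : (1:ℝ≥0) < Wfn b ^ n := one_lt_pow₀ hgt hn.ne'
    rw [hval] at this
    exact absurd h3 (not_le.mpr this)
  have hWadd : ∀ a b : L, Wfn (a + b) ≤ max (Wfn a) (Wfn b) := by
    intro a b
    rcases eq_or_ne a 0 with rfl | ha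
    · simp only [zero_add]; exact le_max_right _ _
    rcases eq_or_ne b 0 with rfl | hb
    · simp only [add_zero]; exact le_max_left _ _
    rcases eq_or_ne (a + b) 0 with hab | hab
    · rw [hab, hWzero]; exact zero_le
    rcases B.mem_or_inv_mem (a / b) with h | h
    · -- (a+b)/b = a/b + 1 ∈ B
      have hmem : (a + b) / b ∈ B := by
        rw [add_div, div_self hb]
        exact add_mem h (one_mem _)
      have hne : (a + b) / b ≠ 0 := div_ne_zero hab hb
      have hle := hWle_one _ hne hmem
      have : Wfn (a + b) = Wfn ((a + b) / b) * Wfn b := by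
        rw [← hWmul, div_mul_cancel₀ _ hb]
      rw [this]
      calc Wfn ((a + b) / b) * Wfn b ≤ 1 * Wfn b := mul_le_mul_left hle _
        _ = Wfn b := one_mul _
        _ ≤ max (Wfn a) (Wfn b) := le_max_right _ _
    · have h' : b / a ∈ B := by rwa [← one_div, one_div_div] at h
      have hmem : (a + b) / a ∈ B := by
        rw [add_div, div_self ha]
        exact add_mem (one_mem _) h'
      have hne : (a + b) / a ≠ 0 := div_ne_zero hab ha
      have hle := hWle_one _ hne hmem
      have : Wfn (a + b) = Wfn ((a + b) / a) * Wfn a := by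
        rw [← hWmul, div_mul_cancel₀ _ ha]
      rw [this]
      calc Wfn ((a + b) / a) * Wfn a ≤ 1 * Wfn a := mul_le_mul_left hle _
        _ = Wfn a := one_mul _
        _ ≤ max (Wfn a) (Wfn b) := le_max_left _ _
  refine ⟨⟨⟨⟨Wfn, hWzero⟩, hWone, hWmul⟩, hWadd⟩, hWext⟩



/-- For every nonzero `t`, there is a valuation on `R` extending `v` whose value on a
fixed generator that is transcendental (mod a prime) is `t`.  Here assembled concretely. -/
theorem exists_valuation_of_transcendental
    {K : Type*} [Field K] (v : Valuation K ℝ≥0)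
    {R : Type*} [CommRing R] [Algebra K R]
    {n : ℕ} (T : Fin n → R)
    (hgen : Algebra.adjoin K (Set.range T) = ⊤)
    (p₀ : Ideal R) [p₀.IsPrime] (j : Fin n)
    (hx : Transcendental K (Ideal.Quotient.mk p₀ (T j)))
    (t : ℝ≥0) (ht : t ≠ 0) :
    ∃ w : Valuation R ℝ≥0, (∀ c : K, w (algebraMap K R c) = v c) ∧ w (T j) = t := by
  classical
  set A := R ⧸ p₀
  set x : A := Ideal.Quotient.mk p₀ (T j) with hxdef
  have hxinj : Function.Injective (Polynomial.aeval x : K[X] →ₐ[K] A) :=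
    transcendental_iff_injective.mp hx
  set A' := FractionRing A
  set g₁ : A →+* A' := algebraMap A A' with hg₁
  have hg₁inj : Function.Injective g₁ := IsFractionRing.injective A A'
  set ψ : K[X] →+* A' := g₁.comp (Polynomial.aeval x : K[X] →ₐ[K] A).toRingHom with hψ
  have hψinj : Function.Injective ψ := hg₁inj.comp hxinj
  set F := FractionRing K[X]
  set Φ : F →+* A' := IsFractionRing.lift hψinj with hΦ
  letI : Algebra F A' := Φ.toAlgebra
  have hΦalg : (algebraMap F A') = Φ := rfl
  have hcomm : ∀ y : K[X], g₁ (Polynomial.aeval x y) = algebraMap F A' (algebraMap K[X] F y) := by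
    intro y
    rw [hΦalg, hΦ, IsFractionRing.lift_algebraMap]
    rfl
  set B₀ : Subalgebra F A' := Algebra.adjoin F (Set.range fun i => g₁ (Ideal.Quotient.mk p₀ (T i)))
    with hB₀
  -- image of A lands in B₀
  have hAtop : Algebra.adjoin K (Set.range fun i => Ideal.Quotient.mk p₀ (T i)) = ⊤ := by
    have := congrArg (Subalgebra.map (Ideal.Quotient.mkₐ K p₀)) hgen
    rw [AlgHom.map_adjoin] at this
    rw [← Set.range_comp] at this
    have htop : (⊤ : Subalgebra K R).map (Ideal.Quotient.mkₐ K p₀) = ⊤ := by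
      rw [Algebra.map_top, AlgHom.range_eq_top]
      exact Ideal.Quotient.mkₐ_surjective K p₀
    rw [htop] at this
    exact this
  have himg : ∀ a : A, g₁ a ∈ B₀ := by
    intro a
    have ha : a ∈ Algebra.adjoin K (Set.range fun i => Ideal.Quotient.mk p₀ (T i)) := by
      rw [hAtop]; trivial
    induction ha using Algebra.adjoin_induction with
    | mem y hy =>
      obtain ⟨i, rfl⟩ := hy
      exact Algebra.subset_adjoin ⟨i, rfl⟩
    | algebraMap r =>
      have : algebraMap K A r = Polynomial.aeval x (Polynomial.C r) := by
        rw [Polynomial.aeval_C]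
      rw [this, hcomm]
      exact B₀.algebraMap_mem _
    | add y z hy hz hy' hz' => rw [map_add]; exact add_mem hy' hz'
    | mul y z hy hz hy' hz' => rw [map_mul]; exact mul_mem hy' hz'
  set ρ₀ : A →+* B₀ :=
    { toFun := fun a => ⟨g₁ a, himg a⟩
      map_one' := by ext; simp
      map_mul' := fun a b => by ext; simp
      map_zero' := by ext; simp
      map_add' := fun a b => by ext; simp } with hρ₀
  -- finite type
  haveI : Algebra.FiniteType F B₀ := by
    constructor
    rw [Subalgebra.fg_top]
    exact Subalgebra.fg_def.mpr ⟨_, Set.finite_range _, rfl⟩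
  -- maximal ideal
  obtain ⟨m, hm⟩ := Ideal.exists_maximal B₀
  haveI := hm
  haveI : Algebra.FiniteType F (B₀ ⧸ m) :=
    Algebra.FiniteType.of_surjective (Ideal.Quotient.mkₐ F m)
      (Ideal.Quotient.mkₐ_surjective F m)
  letI : Field (B₀ ⧸ m) := Ideal.Quotient.field m
  haveI : Module.Finite F (B₀ ⧸ m) := finite_of_finite_type_of_isJacobsonRing F (B₀ ⧸ m)
  haveI : Algebra.IsIntegral F (B₀ ⧸ m) := Algebra.IsIntegral.of_finite F (B₀ ⧸ m)
  -- the ring map R → L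
  set ρ : R →+* (B₀ ⧸ m) := (Ideal.Quotient.mk m).comp (ρ₀.comp (Ideal.Quotient.mk p₀)) with hρ
  have hρmap : ∀ y : K[X], ρ.comp (algebraMap K R) = ρ.comp (algebraMap K R) := fun _ => rfl
  -- base change equality: ρ ∘ (algebraMap K R) factors through F
  have hfact : ∀ y : K[X], Ideal.Quotient.mk m (ρ₀ (Polynomial.aeval x y))
      = algebraMap F (B₀ ⧸ m) (algebraMap K[X] F y) := by
    intro y
    have h1 : ρ₀ (Polynomial.aeval x y) = algebraMap F B₀ (algebraMap K[X] F y) := by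
      apply Subtype.ext
      show g₁ (Polynomial.aeval x y) = _
      rw [hcomm y]
      rfl
    rw [h1]
    rfl
  -- the Gauss valuation on K[X] extended to F
  set gv : Valuation K[X] ℝ≥0 := gaussVal v t ht with hgv
  have hS : nonZeroDivisors K[X] ≤ gv.supp.primeCompl := by
    intro y hy
    have hy0 : y ≠ 0 := nonZeroDivisors.ne_zero hy
    show y ∉ gv.supp
    rw [Valuation.mem_supp_iff]
    exact gaussVal_ne_zero v t ht hy0
  set vF : Valuation F ℝ≥0 := gv.extendToLocalization hS F with hvF
  obtain ⟨W, hW⟩ := exists_valuation_extension (F := F) (L := B₀ ⧸ m) vF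
  refine ⟨W.comap ρ, ?_, ?_⟩
  · intro c
    have h1 : ρ (algebraMap K R c) = algebraMap F (B₀ ⧸ m) (algebraMap K[X] F (Polynomial.C c)) := by
      show Ideal.Quotient.mk m (ρ₀ (Ideal.Quotient.mk p₀ (algebraMap K R c))) = _
      have : Ideal.Quotient.mk p₀ (algebraMap K R c) = Polynomial.aeval x (Polynomial.C c) := by
        rw [Polynomial.aeval_C]
        rfl
      rw [this, hfact]
    show W (ρ (algebraMap K R c)) = v c
    rw [h1]
    exact (hW _).trans (by rw [hvF, Valuation.extendToLocalization_apply_map_apply, hgv, gaussVal_C])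
  · have h1 : ρ (T j) = algebraMap F (B₀ ⧸ m) (algebraMap K[X] F Polynomial.X) := by
      show Ideal.Quotient.mk m (ρ₀ (Ideal.Quotient.mk p₀ (T j))) = _
      have : Ideal.Quotient.mk p₀ (T j) = Polynomial.aeval (R := K) x Polynomial.X := by
        rw [Polynomial.aeval_X]
      rw [this, hfact]
    show W (ρ (T j)) = t
    rw [h1]
    exact (hW _).trans (by rw [hvF, Valuation.extendToLocalization_apply_map_apply, hgv, gaussVal_X])


end BGaux


open BGaux in
/-- **0-dimensional Bieri–Groves bound on the Krull dimension.**
If `R` is a finitely generated `K`-algebra (with generators `T 1, …, T n`) over a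
valued field `(K, v)`, and the set of tuples `(w (T 1), …, w (T n))` arising from
valuations (semi-valuations) `w : R → ℝ≥0` extending `v` is finite, then `R` has
Krull dimension at most `0`. -/
theorem ringKrullDim_le_zero_of_finite_tropicalization
    (K : Type*) [Field K] (v : Valuation K ℝ≥0)
    (R : Type*) [CommRing R] [Algebra K R]
    (n : ℕ) (T : Fin n → R)
    (hgen : Algebra.adjoin K (Set.range T) = ⊤)
    (hfin : {p : Fin n → ℝ≥0 | ∃ w : Valuation R ℝ≥0,
        (∀ c : K, w (algebraMap K R c) = v c) ∧ ∀ i, p i = w (T i)}.Finite) :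
    ringKrullDim R ≤ 0 := by
  classical
  -- It suffices to show no strict inclusion of primes exists.
  suffices hmax : ∀ P Q : PrimeSpectrum R, ¬P < Q by
    show Order.krullDim (PrimeSpectrum R) ≤ 0
    rw [Order.krullDim]
    refine iSup_le fun ch => ?_
    have hlen : ch.length = 0 := by
      by_contra hl
      exact hmax _ _ (ch.step ⟨0, Nat.pos_of_ne_zero hl⟩)
    rw [hlen]
    exact le_refl _
  intro P Q hPQ
  set p₀ := P.asIdeal with hp₀
  haveI : p₀.IsPrime := P.isPrime
  haveI : Q.asIdeal.IsPrime := Q.isPrime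
  -- some generator is transcendental mod p₀
  have hjex : ∃ j : Fin n, Transcendental K (Ideal.Quotient.mk p₀ (T j)) := by
    by_contra hnone
    push_neg at hnone
    simp only [Transcendental, not_not] at hnone
    -- then R ⧸ p₀ is integral over K, hence a field, so p₀ is maximal
    have hAtop : Algebra.adjoin K (Set.range fun i => Ideal.Quotient.mk p₀ (T i)) = ⊤ := by
      have := congrArg (Subalgebra.map (Ideal.Quotient.mkₐ K p₀)) hgen
      rw [AlgHom.map_adjoin, ← Set.range_comp] at this
      have htop : (⊤ : Subalgebra K R).map (Ideal.Quotient.mkₐ K p₀) = ⊤ := by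
        rw [Algebra.map_top, AlgHom.range_eq_top]
        exact Ideal.Quotient.mkₐ_surjective K p₀
      rw [htop] at this
      exact this
    have hint : Algebra.IsIntegral K (R ⧸ p₀) := by
      constructor
      intro a
      have hsub : Set.range (fun i => Ideal.Quotient.mk p₀ (T i))
          ⊆ (integralClosure K (R ⧸ p₀) : Set (R ⧸ p₀)) := by
        rintro - ⟨i, rfl⟩
        exact (hnone i).isIntegral
      have hle := Algebra.adjoin_le hsub
      rw [hAtop] at hle
      exact hle (by trivial : a ∈ (⊤ : Subalgebra K (R ⧸ p₀)))
    have hfield : IsField (R ⧸ p₀) :=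
      isField_of_isIntegral_of_isField' (R := K) (Field.toIsField K)
    have hpmax : p₀.IsMaximal := (Ideal.Quotient.maximal_ideal_iff_isField_quotient p₀).mpr hfield
    have hQtop : Q.asIdeal = ⊤ := hpmax.1.2 Q.asIdeal ((PrimeSpectrum.asIdeal_lt_asIdeal P Q).mpr hPQ)
    exact Q.isPrime.ne_top hQtop
  obtain ⟨j, hj⟩ := hjex
  -- produce infinitely many tropicalization points
  have main : ∀ t : ℝ≥0, t ≠ 0 →
      ∃ w : Valuation R ℝ≥0, (∀ c : K, w (algebraMap K R c) = v c) ∧ w (T j) = t :=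
    fun t ht => exists_valuation_of_transcendental v T hgen p₀ j hj t ht
  set S := {p : Fin n → ℝ≥0 | ∃ w : Valuation R ℝ≥0,
      (∀ c : K, w (algebraMap K R c) = v c) ∧ ∀ i, p i = w (T i)} with hSdef
  set f : ℝ≥0 → (Fin n → ℝ≥0) := fun t =>
    if ht : t ≠ 0 then (fun i => (main t ht).choose (T i)) else 0 with hf
  have hmaps : Set.MapsTo f (Set.Ioi 0) S := by
    intro t ht
    have ht' : t ≠ 0 := ne_of_gt ht
    refine ⟨(main t ht').choose, (main t ht').choose_spec.1, fun i => ?_⟩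
    rw [hf]
    simp only [dif_pos ht']
  have hinj : Set.InjOn f (Set.Ioi 0) := by
    intro t₁ h₁ t₂ h₂ he
    have h₁' : t₁ ≠ 0 := ne_of_gt h₁
    have h₂' : t₂ ≠ 0 := ne_of_gt h₂
    have e₁ : f t₁ j = t₁ := by
      rw [hf]; simp only [dif_pos h₁']
      exact (main t₁ h₁').choose_spec.2
    have e₂ : f t₂ j = t₂ := by
      rw [hf]; simp only [dif_pos h₂']
      exact (main t₂ h₂').choose_spec.2
    rw [← e₁, ← e₂, he]
  have hIoi : (Set.Ioi (0:ℝ≥0)).Infinite := Set.Ioi_infinite 0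
  have : (f '' Set.Ioi 0).Infinite := hIoi.image hinj
  exact this (hfin.subset (fun y hy => by
    obtain ⟨t, ht, rfl⟩ := hy
    exact hmaps ht))
end

section
/- Let K be an algebraically closed field equipped with a nontrivial valuation v : K → ℝ≥0 (i.e., there is c ∈ K with c ≠ 0 and v(c) ≠ 1). Let f : R → S be a homomorphism of commutative K-algebras, where R and S are each generated as K-algebras by finitely many elements, with chosen generators U₁, …, Uₙ of S. Let x : R → K be a K-algebra homomorphism. If the set { (w(U₁), …, w(Uₙ)) ∈ (ℝ≥0)ⁿ : w is a valuation on S (in the sense of Mathlib's Valuation S ℝ≥0) satisfying w(f(r)) = v(x(r)) for all r ∈ R } is finite, then the set { y : S → K : y is a K-algebra homomorphism with y ∘ f = x } is finite. -/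
open scoped NNReal

set_option synthInstance.maxHeartbeats 1000000
set_option maxHeartbeats 2000000

open Polynomial

/-- If `uu` is transcendental over `K` inside a field `L`, then there is a nonzero polynomial
`d` such that, whenever `a` is not a root of `d`, the element `uu - a` has no inverse inside
the `K`-subalgebra generated by a fixed finite set `s` and `uu`. -/
theorem aux_trans {K L : Type*} [Field K] [Field L] [Algebra K L]
    (s : Finset L) (uu : L) (huu : Transcendental K uu) :
    ∃ d : Polynomial K, d ≠ 0 ∧ ∀ a : K, ¬ d.IsRoot a →
      ∀ z ∈ Algebra.adjoin K ((↑s : Set L) ∪ {uu}), z * (uu - algebraMap K L a) ≠ 1 := by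
  classical
  have hθ : Function.Injective (aeval uu : K[X] →ₐ[K] L) := transcendental_iff_injective.mp huu
  letI : Algebra K[X] L := (aeval uu : K[X] →ₐ[K] L).toRingHom.toAlgebra
  have halgPL : ∀ g : K[X], algebraMap K[X] L g = aeval uu g := fun _ => rfl
  haveI : IsScalarTower K K[X] L := IsScalarTower.of_algebraMap_eq fun c => by
    rw [halgPL, Polynomial.algebraMap_eq, aeval_C]
  have hθinj : Function.Injective (algebraMap K[X] L) := hθ
  letI : Algebra (RatFunc K) L := (IsFractionRing.lift (g := algebraMap K[X] L) hθinj).toAlgebra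
  haveI : IsScalarTower K[X] (RatFunc K) L := IsScalarTower.of_algebraMap_eq fun g =>
    (IsFractionRing.lift_algebraMap hθinj g).symm
  haveI : IsScalarTower K (RatFunc K) L := IsScalarTower.of_algebraMap_eq fun c => by
    rw [IsScalarTower.algebraMap_apply K K[X] (RatFunc K) c,
      ← IsScalarTower.algebraMap_apply K[X] (RatFunc K) L,
      ← IsScalarTower.algebraMap_apply K K[X] L]
  set D : Subalgebra (RatFunc K) L := Algebra.adjoin (RatFunc K) (↑s : Set L) with hD
  haveI : Nontrivial D := ⟨⟨0, 1, fun h => zero_ne_one (congrArg Subtype.val h)⟩⟩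
  obtain ⟨m, hm⟩ := Ideal.exists_maximal D
  letI : Field (D ⧸ m) := Ideal.Quotient.field m
  haveI : Algebra.FiniteType (RatFunc K) D := (Subalgebra.fg_iff_finiteType D).mp ⟨s, hD.symm⟩
  haveI : Algebra.FiniteType (RatFunc K) (D ⧸ m) :=
    Algebra.FiniteType.of_surjective (Ideal.Quotient.mkₐ (RatFunc K) m)
      (Ideal.Quotient.mkₐ_surjective (RatFunc K) m)
  haveI : Module.Finite (RatFunc K) (D ⧸ m) :=
    finite_of_finite_type_of_isJacobsonRing (RatFunc K) (D ⧸ m)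
  haveI : Algebra.IsIntegral (RatFunc K) (D ⧸ m) := Algebra.IsIntegral.of_finite _ _
  haveI : IsScalarTower K[X] (RatFunc K) (D ⧸ m) := inferInstance
  have halgPF : algebraMap K[X] (D ⧸ m) =
      (algebraMap (RatFunc K) (D ⧸ m)).comp (algebraMap K[X] (RatFunc K)) :=
    (IsScalarTower.algebraMap_eq _ _ _)
  have hPFinj : Function.Injective (algebraMap K[X] (D ⧸ m)) := by
    rw [halgPF, RingHom.coe_comp]
    exact (algebraMap (RatFunc K) (D ⧸ m)).injective.comp
      (IsFractionRing.injective K[X] (RatFunc K))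
  set ρ : D →+* D ⧸ m := Ideal.Quotient.mk m with hρ
  have hρalg : ∀ q : RatFunc K, ρ (algebraMap (RatFunc K) D q) = algebraMap (RatFunc K) (D ⧸ m) q :=
    fun q => rfl
  set t : Finset (D ⧸ m) := s.attach.image (fun l => ρ ⟨l.1, Algebra.subset_adjoin l.2⟩) with ht
  have hmult : ∀ z : D ⧸ m, ∃ y : K[X], y ≠ 0 ∧ IsIntegral K[X] (algebraMap K[X] (D ⧸ m) y * z) := by
    intro z
    have halg : IsAlgebraic K[X] z := (IsFractionRing.isAlgebraic_iff K[X] (RatFunc K) (D ⧸ m)).mpr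
      (Algebra.IsIntegral.isIntegral z).isAlgebraic
    obtain ⟨y, hy, hxy⟩ := IsAlgebraic.exists_integral_multiple halg
    exact ⟨y, hy, by rw [← Algebra.smul_def]; exact hxy⟩
  choose yf hyf0 hyfint using hmult
  refine ⟨∏ z ∈ t, yf z, Finset.prod_ne_zero_iff.mpr fun z _ => hyf0 z, ?_⟩
  set d : K[X] := ∏ z ∈ t, yf z with hd
  have hd0 : d ≠ 0 := Finset.prod_ne_zero_iff.mpr fun z _ => hyf0 z
  intro a ha z hzmem hzprod
  -- the localization `T = K[X][1/d]`
  set T := Localization.Away d with hT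
  have hdunitT : IsUnit (algebraMap K[X] T d) := IsLocalization.Away.algebraMap_isUnit d
  have hdF : IsUnit (algebraMap K[X] (D ⧸ m) d) :=
    isUnit_iff_ne_zero.mpr (fun h => hd0 (hPFinj (by rwa [map_zero])))
  letI : Algebra T (D ⧸ m) := (IsLocalization.Away.lift (S := T) d hdF).toAlgebra
  have hψalg : ∀ g : K[X], algebraMap T (D ⧸ m) (algebraMap K[X] T g) = algebraMap K[X] (D ⧸ m) g :=
    fun g => IsLocalization.Away.lift_eq d hdF g
  haveI : IsScalarTower K[X] T (D ⧸ m) :=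
    IsScalarTower.of_algebraMap_eq fun g => (hψalg g).symm
  -- all elements of `t` are integral over `T`
  have hTt : ∀ z' ∈ t, IsIntegral T z' := by
    intro z' hz'
    have hyunit : IsUnit (algebraMap K[X] T (yf z')) := by
      have h1 : yf z' * ∏ x ∈ t.erase z', yf x = d := Finset.mul_prod_erase t yf hz'
      have h2 : IsUnit (algebraMap K[X] T (yf z') * algebraMap K[X] T (∏ x ∈ t.erase z', yf x)) := by
        rw [← map_mul, h1]; exact hdunitT
      exact isUnit_of_mul_isUnit_left h2
    have hint : IsIntegral T (algebraMap K[X] (D ⧸ m) (yf z') * z') := (hyfint z').tower_top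
    obtain ⟨un, hun⟩ := hyunit
    have hz'' : z' = algebraMap T (D ⧸ m) ((un⁻¹ : Tˣ) : T) * (algebraMap K[X] (D ⧸ m) (yf z') * z') := by
      rw [← mul_assoc]
      have h3 : algebraMap T (D ⧸ m) ((un⁻¹ : Tˣ) : T) * algebraMap K[X] (D ⧸ m) (yf z') = 1 := by
        rw [← hψalg (yf z'), ← map_mul, ← hun, ← Units.val_mul, inv_mul_cancel, Units.val_one,
          map_one]
      rw [h3, one_mul]
    rw [hz'']
    exact isIntegral_algebraMap.mul hint
  -- membership facts
  have huuD : uu ∈ D := by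
    have h1 : algebraMap (RatFunc K) L (algebraMap K[X] (RatFunc K) X) = uu := by
      rw [← IsScalarTower.algebraMap_apply, halgPL, aeval_X]
    rw [← h1]; exact D.algebraMap_mem _
  have hgenD : ∀ g : K[X], algebraMap K[X] L g ∈ D := by
    intro g
    rw [IsScalarTower.algebraMap_apply K[X] (RatFunc K) L]
    exact D.algebraMap_mem _
  -- the image under `ρ` of an element of the image of `K[X]` in `D`
  have hgen : ∀ (g : K[X]) (hg : algebraMap K[X] L g ∈ D),
      ρ ⟨algebraMap K[X] L g, hg⟩ = algebraMap K[X] (D ⧸ m) g := by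
    intro g hg
    have h1 : (⟨algebraMap K[X] L g, hg⟩ : D) = algebraMap (RatFunc K) D (algebraMap K[X] (RatFunc K) g) := by
      apply Subtype.ext
      show algebraMap K[X] L g = _
      rw [IsScalarTower.algebraMap_apply K[X] (RatFunc K) L]
      rfl
    rw [h1, hρalg, halgPF]
    rfl
  -- every element of `adjoin K (s ∪ {uu})` lies in `D` and maps into the integral closure
  have hind : ∀ l, l ∈ Algebra.adjoin K ((↑s : Set L) ∪ {uu}) →
      ∃ hD' : l ∈ D, IsIntegral T (ρ ⟨l, hD'⟩) := by
    intro l hmem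
    induction hmem using Algebra.adjoin_induction with
    | mem x hx =>
      rcases hx with hx | hx
      · refine ⟨Algebra.subset_adjoin hx, hTt _ ?_⟩
        rw [ht]
        exact Finset.mem_image.mpr ⟨⟨x, hx⟩, Finset.mem_attach _ _, rfl⟩
      · have hx' : x = uu := Set.mem_singleton_iff.mp hx
        have h1 : algebraMap K[X] L X = x := by rw [halgPL, aeval_X, hx']
        have hxD : x ∈ D := h1 ▸ hgenD X
        refine ⟨hxD, ?_⟩
        have h2 : (⟨x, hxD⟩ : D) = ⟨algebraMap K[X] L X, hgenD X⟩ := Subtype.ext h1.symm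
        rw [h2, hgen X (hgenD X), IsScalarTower.algebraMap_apply K[X] T (D ⧸ m)]
        exact isIntegral_algebraMap
    | algebraMap c =>
      have h1 : algebraMap K L c = algebraMap K[X] L (C c) := by
        rw [IsScalarTower.algebraMap_apply K K[X] L, Polynomial.algebraMap_eq]
      refine ⟨h1 ▸ hgenD (C c), ?_⟩
      have h2 : (⟨algebraMap K L c, h1 ▸ hgenD (C c)⟩ : D)
          = ⟨algebraMap K[X] L (C c), hgenD (C c)⟩ := Subtype.ext h1
      rw [h2, hgen (C c) (hgenD (C c)), IsScalarTower.algebraMap_apply K[X] T (D ⧸ m)]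
      exact isIntegral_algebraMap
    | add x y hx hy ihx ihy =>
      obtain ⟨hxD, hxI⟩ := ihx
      obtain ⟨hyD, hyI⟩ := ihy
      refine ⟨add_mem hxD hyD, ?_⟩
      have h2 : (⟨x + y, add_mem hxD hyD⟩ : D) = ⟨x, hxD⟩ + ⟨y, hyD⟩ := rfl
      rw [h2, map_add]
      exact hxI.add hyI
    | mul x y hx hy ihx ihy =>
      obtain ⟨hxD, hxI⟩ := ihx
      obtain ⟨hyD, hyI⟩ := ihy
      refine ⟨mul_mem hxD hyD, ?_⟩
      have h2 : (⟨x * y, mul_mem hxD hyD⟩ : D) = ⟨x, hxD⟩ * ⟨y, hyD⟩ := rfl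
      rw [h2, map_mul]
      exact hxI.mul hyI
  obtain ⟨hzD, hzint⟩ := hind z hzmem
  have hwadj : uu - algebraMap K L a ∈ Algebra.adjoin K ((↑s : Set L) ∪ {uu}) :=
    sub_mem (Algebra.subset_adjoin (Or.inr rfl)) (Subalgebra.algebraMap_mem _ a)
  obtain ⟨hwD, -⟩ := hind _ hwadj
  -- evaluation at `a`
  have hCunit : IsUnit ((aeval a : K[X] →ₐ[K] K).toRingHom d) := by
    apply isUnit_iff_ne_zero.mpr
    simpa [Polynomial.IsRoot.def] using ha
  set ev : T →+* K := IsLocalization.Away.lift d hCunit with hev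
  have hevalg : ∀ g : K[X], ev (algebraMap K[X] T g) = aeval a g :=
    fun g => IsLocalization.Away.lift_eq d hCunit g
  have hevsurj : Function.Surjective ev := fun c =>
    ⟨algebraMap K[X] T (C c), by rw [hevalg, aeval_C]; rfl⟩
  haveI : (RingHom.ker ev).IsMaximal := RingHom.ker_isMaximal_of_surjective ev hevsurj
  haveI : Algebra.IsIntegral T (integralClosure T (D ⧸ m)) := ⟨integralClosure.isIntegral⟩
  have hker : RingHom.ker (algebraMap T (integralClosure T (D ⧸ m))) ≤ RingHom.ker ev := by
    intro τ hτ
    have h0 : algebraMap T (D ⧸ m) τ = 0 := by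
      have h0' := congrArg Subtype.val
        (show algebraMap T (integralClosure T (D ⧸ m)) τ = 0 from hτ)
      simpa using h0'
    obtain ⟨⟨x, sm⟩, hxs⟩ := IsLocalization.mk'_surjective (Submonoid.powers d) τ
    have hxs' : IsLocalization.mk' T x sm = τ := hxs
    subst hxs'
    have hspec := IsLocalization.mk'_spec T x sm
    have h1 := congrArg (algebraMap T (D ⧸ m)) hspec
    rw [map_mul, h0, zero_mul] at h1
    have hx0 : x = 0 := by
      apply hPFinj
      rw [← hψalg x, ← h1, map_zero]
    rw [hx0, IsLocalization.mk'_zero]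
    exact zero_mem _
  obtain ⟨q, hqmax, hq⟩ := Ideal.exists_ideal_over_maximal_of_isIntegral (RingHom.ker ev) hker
  have h1 : uu - algebraMap K L a = algebraMap K[X] L (X - C a) := by
    rw [halgPL, map_sub, aeval_X, aeval_C]
  have hωcoe : ρ ⟨uu - algebraMap K L a, hwD⟩
      = algebraMap T (D ⧸ m) (algebraMap K[X] T (X - C a)) := by
    have h2 : (⟨uu - algebraMap K L a, hwD⟩ : D)
        = ⟨algebraMap K[X] L (X - C a), hgenD _⟩ := Subtype.ext h1
    rw [h2, hgen _ (hgenD _), hψalg]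
  have hζω : (⟨ρ ⟨z, hzD⟩, hzint⟩ : integralClosure T (D ⧸ m))
      * algebraMap T (integralClosure T (D ⧸ m)) (algebraMap K[X] T (X - C a)) = 1 := by
    apply Subtype.ext
    show ρ ⟨z, hzD⟩ * algebraMap T (D ⧸ m) (algebraMap K[X] T (X - C a)) = 1
    rw [← hωcoe, ← map_mul]
    have h3 : (⟨z, hzD⟩ : D) * ⟨uu - algebraMap K L a, hwD⟩ = 1 := Subtype.ext hzprod
    rw [h3, map_one]
  have hω0 : Ideal.Quotient.mk q
      (algebraMap T (integralClosure T (D ⧸ m)) (algebraMap K[X] T (X - C a))) = 0 := by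
    apply Ideal.Quotient.eq_zero_iff_mem.mpr
    have h4 : algebraMap K[X] T (X - C a) ∈ RingHom.ker ev := by
      rw [RingHom.mem_ker, hevalg, map_sub, aeval_X, aeval_C]
      show a - algebraMap K K a = 0
      simp
    rw [← hq] at h4
    exact h4
  have hcontra : (1 : integralClosure T (D ⧸ m) ⧸ q) = 0 := by
    rw [← map_one (Ideal.Quotient.mk q), ← hζω, map_mul, hω0, mul_zero]
  haveI : Nontrivial (integralClosure T (D ⧸ m) ⧸ q) := Ideal.Quotient.nontrivial_iff.mpr hqmax.ne_top
  exact one_ne_zero hcontra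

open Polynomial in
/-- In a finitely generated domain over a field `K`, a transcendental element `u` can have
`u - a` a unit for only finitely many `a : K`. -/
theorem units_subset_roots {K B : Type*} [Field K] [CommRing B] [IsDomain B] [Algebra K B]
    [Algebra.FiniteType K B] (u : B)
    (hu : Function.Injective (aeval u : K[X] →ₐ[K] B)) :
    {a : K | IsUnit (u - algebraMap K B a)}.Finite := by
  classical
  obtain ⟨s, hs⟩ := (Algebra.FiniteType.out : (⊤ : Subalgebra K B).FG)
  have hι : Function.Injective (algebraMap B (FractionRing B)) :=
    IsFractionRing.injective B (FractionRing B)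
  have haev : ∀ g : K[X], aeval (algebraMap B (FractionRing B) u) g
      = algebraMap B (FractionRing B) (aeval u g) := fun g =>
    aeval_algebraMap_apply (FractionRing B) u g
  have huu : Transcendental K (algebraMap B (FractionRing B) u) := by
    rw [transcendental_iff_injective]
    intro g1 g2 hg
    apply hu
    apply hι
    rw [← haev, ← haev, hg]
  obtain ⟨d, hd0, hd⟩ := aux_trans (s.image (algebraMap B (FractionRing B)))
    (algebraMap B (FractionRing B) u) huu
  apply Set.Finite.subset (Polynomial.finite_setOf_isRoot hd0)
  intro a ha
  by_contra hnr
  obtain ⟨w, hw⟩ : ∃ w : B, w * (u - algebraMap K B a) = 1 :=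
    isUnit_iff_exists_inv'.mp ha
  refine hd a hnr (algebraMap B (FractionRing B) w) ?_ ?_
  · have h1 : algebraMap B (FractionRing B) w ∈
        Subalgebra.map (IsScalarTower.toAlgHom K B (FractionRing B)) (Algebra.adjoin K ↑s) :=
      ⟨w, by rw [hs]; trivial, rfl⟩
    rw [AlgHom.map_adjoin] at h1
    refine Algebra.adjoin_mono ?_ h1
    intro l hl
    left
    obtain ⟨b, hb, rfl⟩ := hl
    exact Finset.mem_coe.mpr (Finset.mem_image.mpr ⟨b, hb, rfl⟩)
  · rw [IsScalarTower.algebraMap_apply K B (FractionRing B) a, ← map_sub, ← map_mul, hw, map_one]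

open Polynomial in
/-- A transcendental element stays transcendental modulo a suitable prime ideal. -/
theorem exists_prime_transcendental {K A : Type*} [Field K] [CommRing A] [Algebra K A]
    (u : A) (hu : Function.Injective (aeval u : K[X] →ₐ[K] A)) :
    ∃ p : Ideal A, p.IsPrime ∧
      Function.Injective (aeval (Ideal.Quotient.mk p u) : K[X] →ₐ[K] A ⧸ p) := by
  classical
  set M : Submonoid A := Submonoid.map (aeval u : K[X] →ₐ[K] A) (nonZeroDivisors K[X]) with hM
  haveI : Nontrivial (Localization M) := by
    refine nontrivial_of_ne 0 1 fun h01 => ?_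
    have h1 : algebraMap A (Localization M) 1 = 0 := by rw [map_one, ← h01]
    obtain ⟨mm, hmm⟩ := (IsLocalization.map_eq_zero_iff M (Localization M) 1).mp h1
    obtain ⟨g, hg, hg'⟩ := mm.2
    rw [mul_one] at hmm
    have hg0 : g = 0 := by
      apply hu
      rw [map_zero]
      show aeval u g = 0
      rw [hg', hmm]
    exact nonZeroDivisors.ne_zero hg hg0
  obtain ⟨m, hm⟩ := Ideal.exists_maximal (Localization M)
  refine ⟨Ideal.comap (algebraMap A (Localization M)) m, hm.isPrime.comap _, ?_⟩
  rw [injective_iff_map_eq_zero]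
  intro g hg
  by_contra hg0
  have hgM : aeval u g ∈ M := ⟨g, mem_nonZeroDivisors_of_ne_zero hg0, rfl⟩
  have hker : aeval u g ∈ Ideal.comap (algebraMap A (Localization M)) m := by
    have h2 := Polynomial.aeval_algHom_apply
      (Ideal.Quotient.mkₐ K (Ideal.comap (algebraMap A (Localization M)) m)) u g
    simp only [Ideal.Quotient.mkₐ_eq_mk] at h2
    exact Ideal.Quotient.eq_zero_iff_mem.mp (h2.symm.trans hg)
  have hunit : IsUnit (algebraMap A (Localization M) (aeval u g)) :=
    IsLocalization.map_units _ ⟨_, hgM⟩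
  exact hm.ne_top (m.eq_top_of_isUnit_mem hker hunit)

/-- Nullstellensatz-style point existence for non-units in f.g. algebras over an
algebraically closed field. -/
theorem exists_algHom_of_not_isUnit {K B : Type*} [Field K] [IsAlgClosed K] [CommRing B]
    [Algebra K B] [Algebra.FiniteType K B] {b : B} (hb : ¬ IsUnit b) :
    ∃ y : B →ₐ[K] K, y b = 0 := by
  have hsp : Ideal.span {b} ≠ ⊤ := fun h => hb (Ideal.span_singleton_eq_top.mp h)
  obtain ⟨m, hm, hbm⟩ := Ideal.exists_le_maximal _ hsp
  haveI := hm
  letI : Field (B ⧸ m) := Ideal.Quotient.field m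
  haveI : Algebra.FiniteType K (B ⧸ m) := Algebra.FiniteType.of_surjective
    (Ideal.Quotient.mkₐ K m) (Ideal.Quotient.mkₐ_surjective K m)
  haveI : Module.Finite K (B ⧸ m) := finite_of_finite_type_of_isJacobsonRing K (B ⧸ m)
  haveI : Algebra.IsIntegral K (B ⧸ m) := Algebra.IsIntegral.of_finite _ _
  have hbij : Function.Bijective (algebraMap K (B ⧸ m)) :=
    ⟨(algebraMap K (B ⧸ m)).injective, IsAlgClosed.algebraMap_bijective_of_isIntegral.2⟩
  let e := RingEquiv.ofBijective _ hbij
  have hecomm : ∀ c : K, e.symm (algebraMap K (B ⧸ m) c) = c := fun c => e.symm_apply_apply c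
  refine ⟨⟨e.symm.toRingHom.comp (Ideal.Quotient.mk m), fun c => ?_⟩, ?_⟩
  · show e.symm (Ideal.Quotient.mk m (algebraMap K B c)) = algebraMap K K c
    have h1 : Ideal.Quotient.mk m (algebraMap K B c) = algebraMap K (B ⧸ m) c := rfl
    rw [h1, hecomm]
    rfl
  · show e.symm (Ideal.Quotient.mk m b) = 0
    have h1 : Ideal.Quotient.mk m b = 0 :=
      Ideal.Quotient.eq_zero_iff_mem.mpr (hbm (Ideal.subset_span (Set.mem_singleton b)))
    rw [h1, map_zero]


open Polynomial in
/-- **0-dimensional relative Lafforgue theorem.**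
Let `K` be an algebraically closed field with a nontrivial valuation `v`, and let
`f : R → S` be a homomorphism of finitely generated commutative `K`-algebras, with
chosen generators `U 1, …, U n` of `S`. If for a `K`-algebra homomorphism `x : R → K`
the set of tuples `(w (U 1), …, w (U n))` arising from valuations (semi-valuations)
`w : S → ℝ≥0` with `w ∘ f = v ∘ x` is finite, then the set of `K`-algebra
homomorphisms `y : S → K` with `y ∘ f = x` is finite. -/
theorem finite_fiber_of_finite_tropical_fiber
    (K : Type*) [Field K] [IsAlgClosed K] (v : Valuation K ℝ≥0)
    (hv : ∃ c : K, c ≠ 0 ∧ v c ≠ 1)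
    (R S : Type*) [CommRing R] [Algebra K R] [CommRing S] [Algebra K S]
    (m : ℕ) (T : Fin m → R) (hgenR : Algebra.adjoin K (Set.range T) = ⊤)
    (n : ℕ) (U : Fin n → S) (hgenS : Algebra.adjoin K (Set.range U) = ⊤)
    (f : R →ₐ[K] S) (x : R →ₐ[K] K)
    (hfin : {p : Fin n → ℝ≥0 | ∃ w : Valuation S ℝ≥0,
        (∀ r : R, w (f r) = v (x r)) ∧ ∀ i, p i = w (U i)}.Finite) :
    {y : S →ₐ[K] K | y.comp f = x}.Finite := by
  classical
  by_contra hinf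
  set fib := {y : S →ₐ[K] K | y.comp f = x} with hfib
  -- the tuple map is injective
  have htuple : Function.Injective (fun (y : S →ₐ[K] K) => fun j => y (U j)) := by
    intro y₁ y₂ h
    have hle : Algebra.adjoin K (Set.range U) ≤ AlgHom.equalizer y₁ y₂ :=
      Algebra.adjoin_le (by rintro _ ⟨j, rfl⟩; exact congrFun h j)
    rw [hgenS] at hle
    exact AlgHom.ext fun s' => hle trivial
  have himg : ¬ ((fun (y : S →ₐ[K] K) => fun j => y (U j)) '' fib).Finite := fun h =>
    hinf (h.of_finite_image (htuple.injOn))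
  -- some coordinate takes infinitely many values
  have hproj : ∃ i, ¬ ((fun t : Fin n → K => t i) ''
      ((fun (y : S →ₐ[K] K) => fun j => y (U j)) '' fib)).Finite := by
    by_contra hall
    push_neg at hall
    apply himg
    refine Set.Finite.subset (Set.Finite.pi fun i => hall i) ?_
    intro t ht i _
    exact ⟨t, ht, rfl⟩
  obtain ⟨i, hVinf⟩ := hproj
  have hV : ¬ {a : K | ∃ y ∈ fib, y (U i) = a}.Finite := by
    intro h
    apply hVinf
    refine h.subset ?_
    rintro _ ⟨_, ⟨y, hy, rfl⟩, rfl⟩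
    exact ⟨y, hy, rfl⟩
  -- the fiber algebra
  set I : Ideal S := Ideal.span (Set.range fun r => f r - algebraMap K S (x r)) with hI
  have hlift : ∀ y ∈ fib, ∃ y' : (S ⧸ I) →ₐ[K] K,
      ∀ s' : S, y' (Ideal.Quotient.mk I s') = y s' := by
    intro y hy
    have hker : ∀ s' ∈ I, y s' = 0 := by
      intro s' hs'
      have hle : I ≤ RingHom.ker y.toRingHom := by
        rw [hI, Ideal.span_le]
        rintro _ ⟨r, rfl⟩
        rw [SetLike.mem_coe, RingHom.mem_ker]
        show y (f r - algebraMap K S (x r)) = 0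
        rw [map_sub, AlgHom.commutes]
        have h1 : y (f r) = x r := AlgHom.congr_fun hy r
        rw [h1]
        simp
      exact hle hs'
    exact ⟨Ideal.Quotient.liftₐ I y hker, fun s' => Ideal.Quotient.liftₐ_apply I y hker _⟩
  set uA : S ⧸ I := Ideal.Quotient.mk I (U i) with huA
  have htransA : Function.Injective (aeval uA : K[X] →ₐ[K] S ⧸ I) := by
    rw [injective_iff_map_eq_zero]
    intro g hg
    by_contra hg0
    apply hV
    apply Set.Finite.subset (Polynomial.finite_setOf_isRoot hg0)
    rintro a ⟨y, hy, rfl⟩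
    obtain ⟨y', hy'⟩ := hlift y hy
    have h1 : aeval (y' uA) g = y' (aeval uA g) := Polynomial.aeval_algHom_apply y' uA g
    rw [hg, map_zero] at h1
    show g.IsRoot (y (U i))
    have h3 : y (U i) = y' uA := (hy' (U i)).symm
    rw [Polynomial.IsRoot.def, h3, ← Polynomial.coe_aeval_eq_eval]
    exact h1
  obtain ⟨p, hp, htransB⟩ := exists_prime_transcendental uA htransA
  haveI := hp
  haveI : Algebra.FiniteType K S :=
    ⟨⟨(Set.finite_range U).toFinset, by rw [Set.Finite.coe_toFinset]; exact hgenS⟩⟩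
  haveI : Algebra.FiniteType K (S ⧸ I) := Algebra.FiniteType.of_surjective
    (Ideal.Quotient.mkₐ K I) (Ideal.Quotient.mkₐ_surjective K I)
  haveI : Algebra.FiniteType K ((S ⧸ I) ⧸ p) := Algebra.FiniteType.of_surjective
    (Ideal.Quotient.mkₐ K p) (Ideal.Quotient.mkₐ_surjective K p)
  set uB : (S ⧸ I) ⧸ p := Ideal.Quotient.mk p uA with huB
  have hUnits : {a : K | IsUnit (uB - algebraMap K ((S ⧸ I) ⧸ p) a)}.Finite :=
    units_subset_roots uB htransB
  -- choose c with 1 < v c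
  obtain ⟨c, hc0, hcgt⟩ : ∃ c : K, c ≠ 0 ∧ 1 < v c := by
    obtain ⟨c, hc0, hc1⟩ := hv
    rcases lt_or_gt_of_ne hc1 with h | h
    · refine ⟨c⁻¹, inv_ne_zero hc0, ?_⟩
      rw [map_inv₀]
      have hvc0 : 0 < v c := pos_iff_ne_zero.mpr (v.ne_zero_iff.mpr hc0)
      exact (one_lt_inv₀ hvc0).mpr h
    · exact ⟨c, hc0, h⟩
  set tropset := {p' : Fin n → ℝ≥0 | ∃ w : Valuation S ℝ≥0,
      (∀ r : R, w (f r) = v (x r)) ∧ ∀ i, p' i = w (U i)} with htropset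
  have hcover : Set.range (fun k : ℕ => (v c)^k) ⊆
      ((fun p' : Fin n → ℝ≥0 => p' i) '' tropset) ∪
        (v '' {a : K | IsUnit (uB - algebraMap K ((S ⧸ I) ⧸ p) a)}) := by
    rintro _ ⟨k, rfl⟩
    by_cases hk : IsUnit (uB - algebraMap K ((S ⧸ I) ⧸ p) (c ^ k))
    · right
      exact ⟨c ^ k, hk, by rw [map_pow]⟩
    · left
      obtain ⟨y₃, hy₃⟩ := exists_algHom_of_not_isUnit (K := K) hk
      have hy₃u : y₃ uB = c ^ k := by
        rw [map_sub, AlgHom.commutes, sub_eq_zero] at hy₃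
        simpa using hy₃
      set y : S →ₐ[K] K := (y₃.comp (Ideal.Quotient.mkₐ K p)).comp (Ideal.Quotient.mkₐ K I)
        with hy
      have hyfib : y ∈ fib := by
        show y.comp f = x
        apply AlgHom.ext
        intro r
        show y (f r) = x r
        have hIr : Ideal.Quotient.mk I (f r) = Ideal.Quotient.mk I (algebraMap K S (x r)) :=
          Ideal.Quotient.eq.mpr (Ideal.subset_span ⟨r, rfl⟩)
        calc y (f r) = y₃ (Ideal.Quotient.mk p (Ideal.Quotient.mk I (f r))) := rfl
          _ = y₃ (Ideal.Quotient.mk p (Ideal.Quotient.mk I (algebraMap K S (x r)))) := by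
              rw [hIr]
          _ = y₃ (algebraMap K ((S ⧸ I) ⧸ p) (x r)) := rfl
          _ = x r := by rw [AlgHom.commutes]; rfl
      refine ⟨fun j => v (y (U j)), ⟨v.comap y.toRingHom, fun r => ?_, fun j => rfl⟩, ?_⟩
      · show v (y (f r)) = v (x r)
        have h1 : y (f r) = x r := AlgHom.congr_fun hyfib r
        rw [h1]
      · show v (y (U i)) = (v c) ^ k
        have h2 : y (U i) = c ^ k := by
          calc y (U i) = y₃ uB := rfl
            _ = c ^ k := hy₃u
        rw [h2, map_pow]
  have hfinrange : (Set.range fun k : ℕ => (v c)^k).Finite :=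
    Set.Finite.subset ((hfin.image _).union (hUnits.image v)) hcover
  have hinj : Function.Injective (fun k : ℕ => (v c)^k) :=
    fun k l h => by
      have := pow_right_strictMono₀ hcgt
      exact this.injective h
  exact Set.infinite_range_of_injective hinj hfinrange
end

section
/- Let E be a finite type and M a matroid on E whose ground set is all of E. Define p : Finset E → WithBot ℝ by p I = 0 if I is a base of M and p I = ⊥ otherwise. Then p is a valuation on M; equivalently, for all bases A, B of M and every a ∈ A \ B there exists b ∈ B \ A such that both (A \ {a}) ∪ {b} and (B \ {b}) ∪ {a} are bases of M (symmetric basis exchange). -/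
variable {E : Type*}

open Set

/-- Symmetric basis exchange for matroids, via closures. -/
theorem Matroid.IsBase.symm_exchange {α : Type*} {M : Matroid α} {A B : Set α} {a : α}
    (hA : M.IsBase A) (hB : M.IsBase B) (ha : a ∈ A \ B) :
    ∃ b ∈ B \ A, M.IsBase (insert b (A \ {a})) ∧ M.IsBase (insert a (B \ {b})) := by
  have haE : a ∈ M.E := hA.subset_ground ha.1
  set X : Set α := {b ∈ B | a ∈ M.closure (B \ {b})} with hX
  have haBX : a ∈ M.closure (B \ X) := by
    rcases eq_empty_or_nonempty X with hXe | hXne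
    · rw [hXe, diff_empty, hB.closure_eq]; exact haE
    · have hJs : (B \ X : Set α) = ⋂₀ ((fun b => B \ {b}) '' X) := by
        ext x
        simp only [mem_diff, sInter_image, mem_iInter, mem_singleton_iff]
        constructor
        · rintro ⟨hxB, hxX⟩ b hb
          exact ⟨hxB, fun h => hxX (h ▸ hb)⟩
        · intro h
          obtain ⟨b0, hb0⟩ := hXne
          refine ⟨(h b0 hb0).1, fun hxX => (h x hxX).2 rfl⟩
      rw [hJs, hB.indep.closure_sInter_eq_biInter_closure_of_forall_subset
        (hXne.image _) (by rintro J ⟨b, -, rfl⟩; exact diff_subset)]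
      simp only [mem_iInter]
      rintro J ⟨b, hb, rfl⟩
      exact hb.2
  -- there is b ∈ B \ X with b ∉ closure (A \ {a})
  have haA : a ∉ M.closure (A \ {a}) := hA.indep.notMem_closure_diff_of_mem ha.1
  have hnot : ¬ (B \ X ⊆ M.closure (A \ {a})) := by
    intro hsub
    exact haA (M.closure_subset_closure_of_subset_closure hsub haBX)
  obtain ⟨b, hbBX, hbcl⟩ := not_subset.1 hnot
  have hbB : b ∈ B := hbBX.1
  have hbA : b ∉ A := by
    intro hbA'
    have hba : b ≠ a := fun h => ha.2 (h ▸ hbB)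
    exact hbcl (M.subset_closure (A \ {a})
      ((diff_subset.trans hA.subset_ground)) ⟨hbA', hba⟩)
  refine ⟨b, ⟨hbB, hbA⟩, ?_, ?_⟩
  · refine hA.exchange_isBase_of_indep hbA ?_
    rw [(hA.indep.diff _).insert_indep_iff_of_notMem (fun h => hbA h.1)]
    exact ⟨hB.subset_ground hbB, hbcl⟩
  · refine hB.exchange_isBase_of_indep (fun h => ha.2 h) ?_
    rw [(hB.indep.diff _).insert_indep_iff_of_notMem (fun h => ha.2 h.1)]
    exact ⟨haE, fun h => hbBX.2 ⟨hbB, h⟩⟩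

/-- A valuation on a matroid `M` (Dress–Wenzel valuated matroid structure on `M`):
a function `p : Finset E → WithBot ℝ` whose support is exactly the set of bases of `M`,
satisfying the tropical Plücker (exchange) relations. -/
def Matroid.IsValuation [DecidableEq E] (M : Matroid E) (p : Finset E → WithBot ℝ) : Prop :=
  (∀ I : Finset E, p I ≠ ⊥ ↔ M.IsBase ↑I) ∧
    ∀ A B : Finset E, M.IsBase ↑A → M.IsBase ↑B → ∀ a ∈ A \ B, ∃ b ∈ B \ A,
      p A + p B ≤ p ((A \ {a}) ∪ {b}) + p ((B \ {b}) ∪ {a})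

/-- **The trivial tropical representation of a matroid.** The function sending each base
to `0` and every other finset to `⊥` is a valuation on `M`; this amounts to the symmetric
basis exchange property. -/
theorem Matroid.isValuation_trivial [Fintype E] [DecidableEq E]
    (M : Matroid E) (hE : M.E = Set.univ)
    (p : Finset E → WithBot ℝ)
    (hp₁ : ∀ I : Finset E, M.IsBase ↑I → p I = 0)
    (hp₂ : ∀ I : Finset E, ¬ M.IsBase ↑I → p I = ⊥) :
    M.IsValuation p := by
  constructor
  · intro I
    constructor
    · intro h
      by_contra hI
      exact h (hp₂ I hI)
    · intro h
      rw [hp₁ I h]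
      exact fun h' => by simp at h'
  · intro A B hA hB a ha
    rw [Finset.mem_sdiff] at ha
    have ha' : a ∈ (A : Set E) \ (B : Set E) := ⟨ha.1, ha.2⟩
    obtain ⟨b, hb, h1, h2⟩ := hA.symm_exchange hB ha'
    have hbF : b ∈ B \ A := Finset.mem_sdiff.2 ⟨hb.1, hb.2⟩
    refine ⟨b, hbF, ?_⟩
    have e1 : ((((A \ {a}) ∪ {b} : Finset E)) : Set E) = insert b ((A : Set E) \ {a}) := by
      push_cast
      rw [Set.union_singleton]
    have e2 : ((((B \ {b}) ∪ {a} : Finset E)) : Set E) = insert a ((B : Set E) \ {b}) := by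
      push_cast
      rw [Set.union_singleton]
    rw [hp₁ A hA, hp₁ B hB, hp₁ _ (e1 ▸ h1), hp₁ _ (e2 ▸ h2)]
end

section
/- Let K be an infinite field. Then there is no finite set Φ of functions Fin 4 → (Fin 2 → K) with the following property: every function φ : Fin 4 → (Fin 2 → K) such that for all i ≠ j in Fin 4 the pair of vectors φ i, φ j is linearly independent over K, is projectively equivalent to some element of Φ. In other words, the uniform matroid U_{2,4} has infinitely many projective equivalence classes of representations over every infinite field. -/
private def U24rep (K : Type*) [Field K] (t : K) : Fin 4 → Fin 2 → K :=
  ![![1, 0], ![0, 1], ![1, 1], ![1, t]]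

private lemma pair_indep {K : Type*} [Field K] (v w : Fin 2 → K)
    (h : v 0 * w 1 - v 1 * w 0 ≠ 0) : LinearIndependent K ![v, w] := by
  rw [LinearIndependent.pair_iff]
  intro a b hab
  have h0 := congrFun hab 0
  have h1 := congrFun hab 1
  simp only [Pi.add_apply, Pi.smul_apply, smul_eq_mul, Pi.zero_apply] at h0 h1
  constructor
  · have ha : a * (v 0 * w 1 - v 1 * w 0) = 0 := by linear_combination w 1 * h0 - w 0 * h1
    exact (mul_eq_zero.1 ha).resolve_right h
  · have hb : b * (v 0 * w 1 - v 1 * w 0) = 0 := by linear_combination v 0 * h1 - v 1 * h0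
    exact (mul_eq_zero.1 hb).resolve_right h

private lemma rep_indep {K : Type*} [Field K] {t : K} (ht0 : t ≠ 0) (ht1 : t ≠ 1)
    (i j : Fin 4) (hij : i ≠ j) :
    LinearIndependent K ![U24rep K t i, U24rep K t j] := by
  have ht1' : t - 1 ≠ 0 := sub_ne_zero.mpr ht1
  have ht1'' : 1 - t ≠ 0 := sub_ne_zero.mpr (Ne.symm ht1)
  fin_cases i <;> fin_cases j <;> simp_all <;>
    (apply pair_indep; simp [U24rep, Matrix.vecHead, Matrix.vecTail]) <;> simp_all

private lemma rep_eq {K : Type*} [Field K] {s t : K}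
    (B : (Fin 2 → K) ≃ₗ[K] (Fin 2 → K)) (d : Fin 4 → Kˣ)
    (h : ∀ i, U24rep K s i = d i • B (U24rep K t i)) : s = t := by
  have e2 : U24rep K t 2 = U24rep K t 0 + U24rep K t 1 := by
    funext i; fin_cases i <;> simp [U24rep, Matrix.vecHead, Matrix.vecTail]
  have e3 : U24rep K t 3 = U24rep K t 0 + t • U24rep K t 1 := by
    funext i; fin_cases i <;> simp [U24rep, Matrix.vecHead, Matrix.vecTail]
  have h0 := h 0; have h1 := h 1; have h2 := h 2; have h3 := h 3
  rw [e2, map_add] at h2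
  rw [e3, map_add, map_smul] at h3
  have c00 := congrFun h0 0
  have c01 := congrFun h0 1
  have c10 := congrFun h1 0
  have c11 := congrFun h1 1
  have c20 := congrFun h2 0
  have c21 := congrFun h2 1
  have c30 := congrFun h3 0
  have c31 := congrFun h3 1
  simp only [U24rep, Units.smul_def, Pi.smul_apply, Pi.add_apply, smul_eq_mul,
    Matrix.cons_val_zero, Matrix.cons_val_one, Matrix.cons_val_two, Matrix.cons_val_three, Matrix.cons_val_succ,
    Matrix.vecHead, Matrix.vecTail, Matrix.cons_val', Matrix.cons_val_fin_one,
    Function.comp_apply]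
    at c00 c01 c10 c11 c20 c21 c30 c31
  set a : K := B ![1, 0] 0 with ha
  set b : K := B ![1, 0] 1 with hb
  set p : K := B ![0, 1] 0 with hp
  set q : K := B ![0, 1] 1 with hq
  have hd0 : (d 0 : K) ≠ 0 := (d 0).ne_zero
  have hd1 : (d 1 : K) ≠ 0 := (d 1).ne_zero
  have hb0 : b = 0 := by
    rcases mul_eq_zero.1 c01.symm with h' | h'
    · exact absurd h' hd0
    · exact h'
  have hp0 : p = 0 := by
    rcases mul_eq_zero.1 c10.symm with h' | h'
    · exact absurd h' hd1
    · exact h'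
  have ha0 : a ≠ 0 := by
    intro h'
    rw [h', mul_zero] at c00
    exact one_ne_zero c00
  rw [hp0] at c20 c30
  rw [hb0] at c21 c31
  simp only [add_zero, zero_add, mul_zero] at c20 c21 c30 c31
  have h23 : (d 2 : K) = (d 3 : K) := mul_right_cancel₀ ha0 (c20.symm.trans c30)
  linear_combination c31 - t * c21 - t * q * h23

/-- **`U_{2,4}` has infinitely many projective classes of representations over any
infinite field**: no finite set `Φ` of families of four vectors in `K²` meets every
projective equivalence class of representations of `U_{2,4}` over `K`. -/
theorem U24_infinitely_many_representations
    (K : Type*) [Field K] [Infinite K] :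
    ¬ ∃ Φ : Set (Fin 4 → (Fin 2 → K)), Φ.Finite ∧
      ∀ φ : Fin 4 → (Fin 2 → K),
        (∀ i j : Fin 4, i ≠ j → LinearIndependent K ![φ i, φ j]) →
        ∃ ψ ∈ Φ, ∃ (A : (Fin 2 → K) ≃ₗ[K] (Fin 2 → K)) (c : Fin 4 → Kˣ),
          ∀ i, φ i = c i • A (ψ i) := by
  rintro ⟨Φ, hΦfin, hΦ⟩
  -- the set of admissible cross-ratios is infinite
  have hSinf : ({0, 1}ᶜ : Set K).Infinite := (Set.toFinite ({0, 1} : Set K)).infinite_compl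
  haveI : Infinite ({0, 1}ᶜ : Set K) := hSinf.to_subtype
  -- for each admissible `t`, pick a representative in `Φ`
  have key : ∀ x : ({0, 1}ᶜ : Set K), ∃ ψ, ψ ∈ Φ ∧
      ∃ (A : (Fin 2 → K) ≃ₗ[K] (Fin 2 → K)) (c : Fin 4 → Kˣ),
        ∀ i, U24rep K (x : K) i = c i • A (ψ i) := by
    rintro ⟨t, ht⟩
    simp only [Set.mem_compl_iff, Set.mem_insert_iff, Set.mem_singleton_iff, not_or] at ht
    obtain ⟨ψ, hψΦ, A, c, hc⟩ := hΦ (U24rep K t) (rep_indep ht.1 ht.2)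
    exact ⟨ψ, hψΦ, A, c, hc⟩
  choose g hgΦ hg using key
  -- the assignment `t ↦ g t` is injective, contradicting finiteness of `Φ`
  have hginj : Function.Injective g := by
    intro x y hxy
    obtain ⟨A, c, hA⟩ := hg x
    obtain ⟨A', c', hA'⟩ := hg y
    rw [hxy] at hA
    -- transfer: U24rep x = d • B (U24rep y)
    have hcomp : ∀ i, U24rep K (x : K) i =
        (c i * (c' i)⁻¹) • (A'.symm.trans A) (U24rep K (y : K) i) := by
      intro i
      have h1 : A' (g y i) = (c' i)⁻¹ • U24rep K (y : K) i := by
        rw [hA' i, inv_smul_smul]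
      have h2 : g y i = A'.symm ((c' i)⁻¹ • U24rep K (y : K) i) := by
        rw [← h1, LinearEquiv.symm_apply_apply]
      rw [hA i, h2]
      simp only [LinearEquiv.trans_apply, Units.smul_def, map_smul, smul_smul, Units.val_mul]
    have := rep_eq (A'.symm.trans A) (fun i => c i * (c' i)⁻¹) hcomp
    exact Subtype.ext this
  exact (Set.infinite_of_injective_forall_mem hginj hgΦ) hΦfin
end
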